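/- arXiv:2405.03625 — 3 statements merged into one kernel-verified Lean document; each statement's English description precedes it below -/
import Mathlib

section
/- For k ≥ 1, the generating series of k-admissible strings satisfies Z_w(k)(t) = t^{2-p}(t^{2-p} Z_w(v,0,u)(t))^{k-1} Z_w(v,0)(t)^2. -/
open scoped BigOperators
open PowerSeries

/-- Number of (possibly overlapping) occurrences of the block `w` in `X`. -/
def occCount {α : Type*} [DecidableEq α] (w X : List α) : ℕ :=
  ((List.range X.length).filter fun i => (X.drop i).take w.length = w).length

/-- Number of strings of length `l` over `{0,…,b-1}` with exactly `k` occurrences of `w`,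
starting with `x` and ending with `y` (an empty `x` or `y` imposes no constraint). -/
def Nxy (b : ℕ) (w x y : List (Fin b)) (k l : ℕ) : ℕ :=
  Fintype.card {f : Fin l → Fin b //
    occCount w (List.ofFn f) = k ∧ x <+: List.ofFn f ∧ y <:+ List.ofFn f}

/-- The generating series `Z_w(x,k,y)(t)` as a formal power series over `ℚ`. -/
noncomputable def Zser (b : ℕ) (w x y : List (Fin b)) (k : ℕ) : PowerSeries ℚ :=
  PowerSeries.mk fun l => (Nxy b w x y k l : ℚ)

set_option linter.unusedSectionVars false
set_option linter.unusedVariables false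
set_option maxHeartbeats 1000000

namespace Stmt9

variable {α : Type*} [DecidableEq α]

def occP (w X : List α) (i : ℕ) : Prop := (X.drop i).take w.length = w

instance (w X : List α) : DecidablePred (occP w X) := fun _ => by unfold occP; infer_instance

variable {w : List α}

lemma occP_le (hw : w ≠ []) {X : List α} {i : ℕ} (h : occP w X i) :
    i + w.length ≤ X.length := by
  have hl := congrArg List.length h
  rw [List.length_take, List.length_drop] at hl
  have h1 : w.length ⊓ (X.length - i) = w.length := hl
  have h2 : 1 ≤ w.length := List.length_pos_iff.mpr hw
  rw [inf_eq_left] at h1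
  omega

lemma occCount_eq_card (hw : w ≠ []) (X : List α) {n : ℕ} (hn : X.length ≤ n) :
    occCount w X = ((Finset.range n).filter (occP w X)).card := by
  have base : occCount w X = ((Finset.range X.length).filter (occP w X)).card := rfl
  rw [base]
  congr 1
  apply Finset.ext
  intro i
  simp only [Finset.mem_coe, Finset.mem_filter, Finset.mem_range]
  constructor
  · rintro ⟨h1, h2⟩; exact ⟨lt_of_lt_of_le h1 hn, h2⟩
  · rintro ⟨_, h2⟩
    have := occP_le hw h2
    have : 1 ≤ w.length := List.length_pos_iff.mpr hw
    exact ⟨by omega, h2⟩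

lemma occP_take_iff {X : List α} {m j : ℕ} (h : j + w.length ≤ m) :
    occP w (X.take m) j ↔ occP w X j := by
  unfold occP
  rw [List.drop_take, List.take_take]
  have : w.length ⊓ (m - j) = w.length := by rw [inf_eq_left]; omega
  rw [this]

lemma occP_take_le (hw : w ≠ []) {X : List α} {m j : ℕ} (h : occP w (X.take m) j) :
    j + w.length ≤ m := by
  have := occP_le hw h
  rw [List.length_take] at this
  have h2 : 1 ≤ w.length := List.length_pos_iff.mpr hw
  omega

lemma occP_drop_iff {X : List α} {d j : ℕ} :
    occP w (X.drop d) j ↔ occP w X (d + j) := by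
  unfold occP
  rw [List.drop_drop]

/-- Splitting the occurrence count at a position `i` (typically an occurrence). -/
lemma occ_split (hw : w ≠ []) (X : List α) {i : ℕ} (h : i + w.length ≤ X.length) :
    occCount w X =
      occCount w (X.take (i + w.length)) + occCount w (X.drop (i + 1)) := by
  have hp : 1 ≤ w.length := List.length_pos_iff.mpr hw
  rw [occCount_eq_card hw X (le_refl _)]
  have hsplit : Finset.range X.length =
      Finset.range (i+1) ∪ Finset.Ico (i+1) X.length := by
    rw [Finset.range_eq_Ico, Finset.range_eq_Ico]
    rw [Finset.Ico_union_Ico_eq_Ico (by omega) (by omega)]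
  rw [hsplit, Finset.filter_union, Finset.card_union_of_disjoint]
  · congr 1
    · -- first piece
      have h1 : occCount w (X.take (i + w.length)) =
          ((Finset.range (i + w.length)).filter (occP w (X.take (i + w.length)))).card := by
        apply occCount_eq_card hw
        rw [List.length_take]; omega
      rw [h1]
      congr 1
      apply Finset.ext
      intro j
      simp only [Finset.mem_coe, Finset.mem_filter, Finset.mem_range]
      constructor
      · rintro ⟨h1, h2⟩
        have hj : j + w.length ≤ i + w.length := by omega
        exact ⟨by omega, (occP_take_iff hj).mpr h2⟩
      · rintro ⟨h1, h2⟩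
        have hj := occP_take_le hw h2
        exact ⟨by omega, (occP_take_iff hj).mp h2⟩
    · -- second piece
      have h2 : occCount w (X.drop (i+1)) =
          ((Finset.range (X.length - (i+1))).filter (occP w (X.drop (i+1)))).card := by
        apply occCount_eq_card hw
        rw [List.length_drop]
      rw [h2]
      apply Finset.card_nbij' (fun j => j - (i+1)) (fun j => (i+1) + j)
      · intro a ha
        simp only [Finset.mem_coe, Finset.mem_filter, Finset.mem_Ico] at ha
        simp only [Finset.mem_coe, Finset.mem_filter, Finset.mem_range]
        refine ⟨by omega, ?_⟩
        rw [occP_drop_iff]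
        have : i + 1 + (a - (i+1)) = a := by omega
        rw [this]; exact ha.2
      · intro a ha
        simp only [Finset.mem_coe, Finset.mem_filter, Finset.mem_range] at ha
        simp only [Finset.mem_coe, Finset.mem_filter, Finset.mem_Ico]
        have := occP_drop_iff.mp ha.2
        exact ⟨⟨by omega, by have := occP_le hw this; omega⟩, this⟩
      · intro a ha
        simp only [Finset.mem_coe, Finset.mem_filter, Finset.mem_Ico] at ha
        dsimp only
        omega
      · intro a ha; dsimp only; omega
  · -- disjoint
    apply Finset.disjoint_filter_filter
    rw [Finset.range_eq_Ico]
    exact Finset.Ico_disjoint_Ico_consecutive 0 (i+1) X.length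

lemma occCount_eq_zero_of_lt (hw : w ≠ []) {X : List α} (h : X.length < w.length) :
    occCount w X = 0 := by
  rw [occCount_eq_card hw X le_rfl, Finset.card_eq_zero, Finset.filter_eq_empty_iff]
  intro i _ hocc
  have := occP_le hw hocc
  omega

lemma prefix_iff_occP (hw : w ≠ []) {X : List α} : w <+: X ↔ occP w X 0 := by
  rw [List.prefix_iff_eq_take]
  unfold occP
  rw [List.drop_zero]
  exact ⟨fun h => h.symm, fun h => h.symm⟩

lemma suffix_iff_occP (hw : w ≠ []) {X : List α} (h : w.length ≤ X.length) :
    w <:+ X ↔ occP w X (X.length - w.length) := by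
  rw [List.suffix_iff_eq_drop]
  constructor
  · intro he
    unfold occP
    rw [← he]
    exact List.take_length
  · intro he
    calc w = (X.drop (X.length - w.length)).take w.length := he.symm
      _ = X.drop (X.length - w.length) :=
        List.take_of_length_le (by rw [List.length_drop]; omega)

/-- count at the end: snoc decomposition -/
lemma occ_snoc (hw : w ≠ []) (X : List α) :
    occCount w X = occCount w (X.take (X.length - 1)) + (if w <:+ X then 1 else 0) := by
  have hp : 1 ≤ w.length := List.length_pos_iff.mpr hw
  by_cases hnp : X.length < w.length
  · rw [occCount_eq_zero_of_lt hw hnp, occCount_eq_zero_of_lt hw (by rw [List.length_take]; omega)]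
    have : ¬ w <:+ X := fun hs => absurd hs.length_le (by omega)
    simp [this]
  · push_neg at hnp
    have hsplit : Finset.range X.length =
        Finset.range (X.length - w.length) ∪ Finset.Ico (X.length - w.length) X.length := by
      rw [Finset.range_eq_Ico, Finset.range_eq_Ico]
      exact (Finset.Ico_union_Ico_eq_Ico (by omega) (by omega)).symm
    have hdisj : Disjoint ((Finset.range (X.length - w.length)).filter (occP w X))
        ((Finset.Ico (X.length - w.length) X.length).filter (occP w X)) := by
      apply Finset.disjoint_filter_filter
      rw [Finset.range_eq_Ico]
      exact Finset.Ico_disjoint_Ico_consecutive 0 (X.length - w.length) X.length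
    have hlow : ((Finset.range (X.length - w.length)).filter (occP w X)).card =
        occCount w (X.take (X.length - 1)) := by
      rw [occCount_eq_card hw (X.take (X.length - 1)) (n := X.length - 1)
        (by rw [List.length_take]; exact inf_le_left)]
      congr 1
      apply Finset.ext
      intro j
      simp only [Finset.mem_coe, Finset.mem_filter, Finset.mem_range]
      constructor
      · rintro ⟨h1, h2⟩
        exact ⟨by omega, (occP_take_iff (by omega : j + w.length ≤ X.length - 1)).mpr h2⟩
      · rintro ⟨h1, h2⟩
        have hj := occP_take_le hw h2
        exact ⟨by omega, (occP_take_iff (by omega : j + w.length ≤ X.length - 1)).mp h2⟩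
    have hhigh : ((Finset.Ico (X.length - w.length) X.length).filter (occP w X)).card =
        if w <:+ X then 1 else 0 := by
      by_cases hsuf : w <:+ X
      · rw [if_pos hsuf]
        have hocc : occP w X (X.length - w.length) := (suffix_iff_occP hw hnp).mp hsuf
        have : (Finset.Ico (X.length - w.length) X.length).filter (occP w X)
            = {X.length - w.length} := by
          apply Finset.ext
          intro j
          simp only [Finset.mem_coe, Finset.mem_filter, Finset.mem_Ico, Finset.mem_singleton]
          constructor
          · rintro ⟨⟨h1, h2⟩, h3⟩
            have := occP_le hw h3
            omega
          · intro h; subst h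
            exact ⟨⟨le_refl _, by omega⟩, hocc⟩
        rw [this, Finset.card_singleton]
      · rw [if_neg hsuf]
        rw [Finset.card_eq_zero, Finset.filter_eq_empty_iff]
        intro j hj hocc2
        simp only [Finset.mem_Ico] at hj
        have := occP_le hw hocc2
        have hje : j = X.length - w.length := by omega
        exact hsuf ((suffix_iff_occP hw hnp).mpr (hje ▸ hocc2))
    rw [occCount_eq_card hw X le_rfl, hsplit, Finset.filter_union,
      Finset.card_union_of_disjoint hdisj, hlow, hhigh]

/-- count at the start: cons decomposition -/
lemma occ_cons (hw : w ≠ []) (X : List α) :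
    occCount w X = (if w <+: X then 1 else 0) + occCount w (X.drop 1) := by
  have hp : 1 ≤ w.length := List.length_pos_iff.mpr hw
  by_cases hnp : X.length < w.length
  · rw [occCount_eq_zero_of_lt hw hnp, occCount_eq_zero_of_lt hw (by rw [List.length_drop]; omega)]
    have : ¬ w <+: X := fun hs => absurd hs.length_le (by omega)
    simp [this]
  · push_neg at hnp
    rw [occ_split hw X (by omega : 0 + w.length ≤ X.length)]
    simp only [zero_add]
    have hfirst : occCount w (X.take w.length) = if w <+: X then 1 else 0 := by
      by_cases hpre : w <+: X
      · rw [if_pos hpre]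
        have hocc : occP w X 0 := (prefix_iff_occP hw).mp hpre
        rw [occCount_eq_card hw (X.take w.length) (n := w.length) (by rw [List.length_take]; exact inf_le_left)]
        have : (Finset.range w.length).filter (occP w (X.take w.length)) = {0} := by
          apply Finset.ext
          intro j
          simp only [Finset.mem_coe, Finset.mem_filter, Finset.mem_range, Finset.mem_singleton]
          constructor
          · rintro ⟨h1, h2⟩
            have := occP_take_le hw h2
            omega
          · intro h; subst h
            exact ⟨by omega, (occP_take_iff (by omega)).mpr hocc⟩
        rw [this, Finset.card_singleton]
      · rw [if_neg hpre]
        rw [occCount_eq_card hw (X.take w.length) (n := w.length) (by rw [List.length_take]; exact inf_le_left)]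
        rw [Finset.card_eq_zero, Finset.filter_eq_empty_iff]
        intro j hj h2
        have hle := occP_take_le hw h2
        have hj0 : j = 0 := by omega
        subst hj0
        exact hpre ((prefix_iff_occP hw).mpr ((occP_take_iff (by omega)).mp h2))
    rw [hfirst]

lemma occ_unique (hw : w ≠ []) {X : List α} (h1 : occCount w X = 1) {i j : ℕ}
    (hi : occP w X i) (hj : occP w X j) : i = j := by
  have hcard : ((Finset.range X.length).filter (occP w X)).card ≤ 1 := by
    rw [← occCount_eq_card hw X le_rfl, h1]
  have hp : 1 ≤ w.length := List.length_pos_iff.mpr hw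
  apply Finset.card_le_one.mp hcard
  · simp only [Finset.mem_coe, Finset.mem_filter, Finset.mem_range]
    exact ⟨by have := occP_le hw hi; omega, hi⟩
  · simp only [Finset.mem_coe, Finset.mem_filter, Finset.mem_range]
    exact ⟨by have := occP_le hw hj; omega, hj⟩

lemma exists_occP (hw : w ≠ []) {X : List α} (h : occCount w X ≠ 0) : ∃ i, occP w X i := by
  rw [occCount_eq_card hw X le_rfl] at h
  obtain ⟨i, hi⟩ := Finset.card_pos.mp (Nat.pos_of_ne_zero h)
  exact ⟨i, (Finset.mem_filter.mp hi).2⟩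

noncomputable def minOcc (w X : List α) : ℕ := sInf {i | occP w X i}

lemma minOcc_occP (hw : w ≠ []) {X : List α} (h : occCount w X ≠ 0) : occP w X (minOcc w X) :=
  Nat.sInf_mem (exists_occP hw h)

lemma minOcc_le {X : List α} {i : ℕ} (h : occP w X i) : minOcc w X ≤ i := Nat.sInf_le h

/-! ### counting strings -/

def strs (b l : ℕ) : Finset (List (Fin b)) :=
  Finset.image List.ofFn (Finset.univ : Finset (Fin l → Fin b))

lemma mem_strs {b l : ℕ} {X : List (Fin b)} : X ∈ strs b l ↔ X.length = l := by
  simp only [strs, Finset.mem_image, Finset.mem_univ, true_and]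
  constructor
  · rintro ⟨f, rfl⟩; exact List.length_ofFn
  · intro h; subst h; exact ⟨X.get, List.ofFn_get X⟩

def C (b : ℕ) (w x y : List (Fin b)) (k l : ℕ) : ℕ :=
  ((strs b l).filter fun X => occCount w X = k ∧ x <+: X ∧ y <:+ X).card

lemma Nxy_eq_C (b : ℕ) (w x y : List (Fin b)) (k l : ℕ) :
    Nxy b w x y k l = C b w x y k l := by
  rw [Nxy, Fintype.card_subtype, C, strs, Finset.filter_image,
    Finset.card_image_of_injective _ (fun f g h => List.ofFn_inj.mp h)]

lemma C_eq_zero_of_lt_suffix {b : ℕ} {w x y : List (Fin b)} {k l : ℕ} (h : l < y.length) :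
    C b w x y k l = 0 := by
  rw [C, Finset.card_eq_zero, Finset.filter_eq_empty_iff]
  rintro X hX ⟨-, -, hsuf⟩
  have := hsuf.length_le
  rw [mem_strs.mp hX] at this
  omega

lemma C_eq_zero_of_lt_prefix {b : ℕ} {w x y : List (Fin b)} {k l : ℕ} (h : l < x.length) :
    C b w x y k l = 0 := by
  rw [C, Finset.card_eq_zero, Finset.filter_eq_empty_iff]
  rintro X hX ⟨-, hpre, -⟩
  have := hpre.length_le
  rw [mem_strs.mp hX] at this
  omega

variable {b : ℕ}

/-! ### dropping the last letter of a string with a single occurrence at the end -/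

lemma C_drop_last {w : List (Fin b)} (hw : w ≠ []) {x : List (Fin b)}
    (hx : x.length < w.length) (c : ℕ) :
    C b w x w 1 (c + 1) = C b w x (w.take (w.length - 1)) 0 c := by
  have hp : 1 ≤ w.length := List.length_pos_iff.mpr hw
  have hulen : (w.take (w.length - 1)).length = w.length - 1 := by
    rw [List.length_take]; omega
  rw [C, C]
  apply Finset.card_nbij' (fun X => X.take c) (fun Y => Y ++ [w.getLast hw])
  · -- forward membership
    intro X hX
    simp only [Finset.mem_coe, Finset.mem_filter] at hX ⊢
    obtain ⟨hXs, hocc, hpre, hsuf⟩ := hX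
    have hlen : X.length = c + 1 := mem_strs.mp hXs
    have hwc : w.length ≤ c + 1 := by have := hsuf.length_le; omega
    have htake0 : occCount w (X.take c) = 0 := by
      have := occ_snoc hw X
      rw [hlen] at this
      simp only [Nat.add_sub_cancel, if_pos hsuf, hocc] at this
      omega
    refine ⟨mem_strs.mpr (by rw [List.length_take]; omega), htake0, ?_, ?_⟩
    · exact List.prefix_take_iff.mpr ⟨hpre, by omega⟩
    · -- u <:+ X.take c
      have hdrop : w = X.drop (c + 1 - w.length) := by
        have := List.suffix_iff_eq_drop.mp hsuf
        rwa [hlen] at this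
      have h2 : (X.take c).drop (c + 1 - w.length)
          = (X.drop (c + 1 - w.length)).take (c - (c + 1 - w.length)) :=
        List.drop_take
      have h3 : w.take (w.length - 1) = (X.take c).drop (c + 1 - w.length) := by
        rw [h2, ← hdrop]
        congr 1
        omega
      rw [h3]
      exact List.drop_suffix _ _
  · -- backward membership
    intro Y hY
    simp only [Finset.mem_coe, Finset.mem_filter] at hY ⊢
    obtain ⟨hYs, hocc, hpre, hsuf⟩ := hY
    have hYlen : Y.length = c := mem_strs.mp hYs
    have hcp : w.length - 1 ≤ c := by have := hsuf.length_le; omega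
    have hXtake : (Y ++ [w.getLast hw]).take c = Y := by
      rw [← hYlen]; exact List.take_left
    have hXsuf : w <:+ Y ++ [w.getLast hw] := by
      have hu : w.take (w.length - 1) = Y.drop (c - (w.length - 1)) := by
        have := List.suffix_iff_eq_drop.mp hsuf
        rwa [hYlen, hulen] at this
      rw [List.suffix_iff_eq_drop]
      have hlenX : (Y ++ [w.getLast hw]).length = c + 1 := by
        simp [hYlen]
      rw [hlenX]
      have h1 : (Y ++ [w.getLast hw]).drop (c + 1 - w.length) =
          Y.drop (c - (w.length - 1)) ++ [w.getLast hw] := by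
        rw [List.drop_append,
          show c + 1 - w.length - Y.length = 0 by omega, List.drop_zero,
          show c + 1 - w.length = c - (w.length - 1) by omega]
      rw [h1, ← hu, ← List.dropLast_eq_take, List.dropLast_append_getLast hw]
    have hXocc : occCount w (Y ++ [w.getLast hw]) = 1 := by
      have := occ_snoc hw (Y ++ [w.getLast hw])
      rw [List.length_append, hYlen] at this
      simp only [List.length_cons, List.length_nil, Nat.add_sub_cancel, if_pos hXsuf] at this
      rw [this, hXtake, hocc]
    refine ⟨mem_strs.mpr (by simp [hYlen]), hXocc,
      hpre.trans (List.prefix_append Y _), hXsuf⟩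
  · -- left inverse
    intro X hX
    simp only [Finset.mem_coe, Finset.mem_filter] at hX
    obtain ⟨hXs, hocc, hpre, hsuf⟩ := hX
    have hlen : X.length = c + 1 := mem_strs.mp hXs
    obtain ⟨t, rfl⟩ := hsuf
    have h1 : t ++ w = (t ++ w.dropLast) ++ [w.getLast hw] := by
      rw [List.append_assoc, List.dropLast_append_getLast hw]
    have h2 : (t ++ w).take c = t ++ w.dropLast := by
      rw [h1, show c = (t ++ w.dropLast).length by
        rw [List.length_append, List.length_dropLast]
        rw [List.length_append] at hlen
        omega]
      exact List.take_left
    dsimp only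
    rw [h2, ← h1]
  · -- right inverse
    intro Y hY
    simp only [Finset.mem_coe, Finset.mem_filter] at hY
    have hYlen : Y.length = c := mem_strs.mp hY.1
    rw [← hYlen]
    exact List.take_left

/-! ### dropping the first letter of a string with a single occurrence at the start -/

lemma C_drop_head {w : List (Fin b)} (hw : w ≠ []) (m : ℕ) :
    C b w w [] 1 (m + 1) = C b w (w.drop 1) [] 0 m := by
  have hp : 1 ≤ w.length := List.length_pos_iff.mpr hw
  rw [C, C]
  apply Finset.card_nbij' (fun X => X.drop 1) (fun Y => w.head hw :: Y)
  · intro X hX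
    simp only [Finset.mem_coe, Finset.mem_filter] at hX ⊢
    obtain ⟨hXs, hocc, hpre, -⟩ := hX
    have hlen : X.length = m + 1 := mem_strs.mp hXs
    have hdocc : occCount w (X.drop 1) = 0 := by
      have := occ_cons hw X
      rw [if_pos hpre, hocc] at this
      omega
    refine ⟨mem_strs.mpr (by rw [List.length_drop]; omega), hdocc, ?_, List.nil_suffix⟩
    obtain ⟨t, rfl⟩ := hpre
    rw [List.drop_append, show 1 - w.length = 0 by omega, List.drop_zero]
    exact List.prefix_append _ _
  · intro Y hY
    simp only [Finset.mem_coe, Finset.mem_filter] at hY ⊢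
    obtain ⟨hYs, hocc, hpre, -⟩ := hY
    have hYlen : Y.length = m := mem_strs.mp hYs
    obtain ⟨t, hYt⟩ := hpre
    have hX : w.head hw :: Y = w ++ t := by
      conv_rhs => rw [← List.cons_head_tail hw]
      rw [← hYt, List.cons_append, List.drop_one]
    have hXpre : w <+: w.head hw :: Y := by rw [hX]; exact List.prefix_append _ _
    have hXocc : occCount w (w.head hw :: Y) = 1 := by
      have := occ_cons hw (w.head hw :: Y)
      rw [if_pos hXpre] at this
      rw [this, List.drop_one, List.tail_cons, hocc]
    refine ⟨mem_strs.mpr (by rw [List.length_cons, hYlen]), hXocc, hXpre, List.nil_suffix⟩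
  · intro X hX
    simp only [Finset.mem_coe, Finset.mem_filter] at hX
    obtain ⟨hXs, hocc, hpre, -⟩ := hX
    obtain ⟨t, rfl⟩ := hpre
    dsimp only
    rw [List.drop_append, show 1 - w.length = 0 by omega, List.drop_zero]
    conv_rhs => rw [← List.cons_head_tail hw]
    rw [List.cons_append, List.drop_one]
  · intro Y hY
    dsimp only
    rw [List.drop_one, List.tail_cons]

/-- appending a free letter -/
lemma snoc_count (hb : 0 < b) {w : List (Fin b)} (hw : w ≠ []) (m : ℕ) :
    b * C b w [] [] 0 m = C b w [] [] 0 (m + 1) + C b w [] w 1 (m + 1) := by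
  have hp : 1 ≤ w.length := List.length_pos_iff.mpr hw
  classical
  set d0 : Fin b := ⟨0, hb⟩ with hd0
  set B : Finset (List (Fin b)) :=
    (strs b (m+1)).filter (fun X => occCount w (X.take m) = 0) with hB
  have step1 : B.card = b * C b w [] [] 0 m := by
    have hcard : ((Finset.univ : Finset (Fin b)) ×ˢ
        ((strs b m).filter fun X => occCount w X = 0 ∧ [] <+: X ∧ [] <:+ X)).card
        = b * C b w [] [] 0 m := by
      rw [Finset.card_product, Finset.card_univ, Fintype.card_fin, C]
    rw [← hcard]
    apply Finset.card_nbij' (fun X => (X.getLastD d0, X.take m))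
      (fun cz => cz.2 ++ [cz.1])
    · intro X hX
      simp only [hB, Finset.mem_coe, Finset.mem_filter] at hX
      obtain ⟨hXs, htocc⟩ := hX
      have hlen : X.length = m + 1 := mem_strs.mp hXs
      simp only [Finset.mem_coe, Finset.mem_product, Finset.mem_univ, Finset.mem_filter, true_and]
      exact ⟨mem_strs.mpr (by rw [List.length_take]; omega), htocc,
        List.nil_prefix, List.nil_suffix⟩
    · intro cz hcz
      simp only [Finset.mem_coe, Finset.mem_product, Finset.mem_univ, Finset.mem_filter, true_and] at hcz
      obtain ⟨hzs, hocc, -, -⟩ := hcz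
      have hzlen : cz.2.length = m := mem_strs.mp hzs
      simp only [hB, Finset.mem_coe, Finset.mem_filter]
      have htake : (cz.2 ++ [cz.1]).take m = cz.2 := List.take_left' hzlen
      refine ⟨mem_strs.mpr (by simp [hzlen]), by rw [htake]; exact hocc⟩
    · intro X hX
      simp only [hB, Finset.mem_coe, Finset.mem_filter] at hX
      have hlen : X.length = m + 1 := mem_strs.mp hX.1
      have hne : X ≠ [] := by intro h; rw [h] at hlen; simp at hlen
      rcases List.eq_nil_or_concat X with h | ⟨Z, c, rfl⟩
      · exact absurd h hne
      · rw [List.concat_eq_append] at hlen ⊢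
        have hZlen : Z.length = m := by
          rw [List.length_append] at hlen; simp at hlen; omega
        simp only [List.getLastD_concat, List.take_left' hZlen]
    · intro cz hcz
      simp only [Finset.mem_coe, Finset.mem_product, Finset.mem_univ, Finset.mem_filter, true_and] at hcz
      have hzlen : cz.2.length = m := mem_strs.mp hcz.1
      simp only [List.getLastD_concat, List.take_left' hzlen]
  have step2 : B.card = C b w [] [] 0 (m + 1) + C b w [] w 1 (m + 1) := by
    have hBeq : B = ((strs b (m+1)).filter fun X => occCount w X = 0 ∧ [] <+: X ∧ [] <:+ X)
        ∪ ((strs b (m+1)).filter fun X => occCount w X = 1 ∧ [] <+: X ∧ w <:+ X) := by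
      rw [hB, ← Finset.filter_or]
      apply Finset.filter_congr
      intro X hXs
      have hlen : X.length = m + 1 := mem_strs.mp hXs
      have hsn := occ_snoc hw X
      rw [hlen, Nat.add_sub_cancel] at hsn
      simp only [List.nil_prefix, List.nil_suffix, true_and, and_true]
      constructor
      · intro h0
        rw [h0] at hsn
        by_cases hsuf : w <:+ X
        · rw [if_pos hsuf] at hsn
          exact Or.inr ⟨by omega, hsuf⟩
        · rw [if_neg hsuf] at hsn
          exact Or.inl (by omega)
      · rintro (h0 | ⟨h1, hsuf⟩)
        · rw [h0] at hsn
          omega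
        · rw [h1, if_pos hsuf] at hsn
          omega
    rw [hBeq, Finset.card_union_of_disjoint, C, C]
    rw [Finset.disjoint_filter]
    rintro X hX ⟨h0, -⟩ ⟨h1, -⟩
    omega
  omega

/-- prepending a free letter -/
lemma cons_count (hb : 0 < b) {w : List (Fin b)} (hw : w ≠ []) (m : ℕ) :
    b * C b w [] [] 0 m = C b w [] [] 0 (m + 1) + C b w w [] 1 (m + 1) := by
  have hp : 1 ≤ w.length := List.length_pos_iff.mpr hw
  classical
  set d0 : Fin b := ⟨0, hb⟩ with hd0
  set B : Finset (List (Fin b)) :=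
    (strs b (m+1)).filter (fun X => occCount w (X.drop 1) = 0) with hB
  have step1 : B.card = b * C b w [] [] 0 m := by
    have hcard : ((Finset.univ : Finset (Fin b)) ×ˢ
        ((strs b m).filter fun X => occCount w X = 0 ∧ [] <+: X ∧ [] <:+ X)).card
        = b * C b w [] [] 0 m := by
      rw [Finset.card_product, Finset.card_univ, Fintype.card_fin, C]
    rw [← hcard]
    apply Finset.card_nbij' (fun X => (X.headD d0, X.drop 1))
      (fun cz => cz.1 :: cz.2)
    · intro X hX
      simp only [hB, Finset.mem_coe, Finset.mem_filter] at hX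
      obtain ⟨hXs, htocc⟩ := hX
      have hlen : X.length = m + 1 := mem_strs.mp hXs
      simp only [Finset.mem_coe, Finset.mem_product, Finset.mem_univ, Finset.mem_filter, true_and]
      exact ⟨mem_strs.mpr (by rw [List.length_drop]; omega), htocc,
        List.nil_prefix, List.nil_suffix⟩
    · intro cz hcz
      simp only [Finset.mem_coe, Finset.mem_product, Finset.mem_univ, Finset.mem_filter, true_and] at hcz
      obtain ⟨hzs, hocc, -, -⟩ := hcz
      have hzlen : cz.2.length = m := mem_strs.mp hzs
      simp only [hB, Finset.mem_coe, Finset.mem_filter]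
      refine ⟨mem_strs.mpr (by simp [hzlen]), ?_⟩
      rw [List.drop_one, List.tail_cons]
      exact hocc
    · intro X hX
      simp only [hB, Finset.mem_coe, Finset.mem_filter] at hX
      have hlen : X.length = m + 1 := mem_strs.mp hX.1
      have hne : X ≠ [] := by intro h; rw [h] at hlen; simp at hlen
      obtain ⟨a, t, rfl⟩ := List.exists_cons_of_ne_nil hne
      simp [List.drop_one]
    · intro cz hcz
      simp [List.drop_one]
  have step2 : B.card = C b w [] [] 0 (m + 1) + C b w w [] 1 (m + 1) := by
    have hBeq : B = ((strs b (m+1)).filter fun X => occCount w X = 0 ∧ [] <+: X ∧ [] <:+ X)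
        ∪ ((strs b (m+1)).filter fun X => occCount w X = 1 ∧ w <+: X ∧ [] <:+ X) := by
      rw [hB, ← Finset.filter_or]
      apply Finset.filter_congr
      intro X hXs
      have hcn := occ_cons hw X
      simp only [List.nil_prefix, List.nil_suffix, true_and, and_true]
      constructor
      · intro h0
        rw [h0] at hcn
        by_cases hpre : w <+: X
        · rw [if_pos hpre] at hcn
          exact Or.inr ⟨by omega, hpre⟩
        · rw [if_neg hpre] at hcn
          exact Or.inl (by omega)
      · rintro (h0 | ⟨h1, hpre⟩)
        · rw [h0] at hcn
          omega
        · rw [h1, if_pos hpre] at hcn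
          omega
    rw [hBeq, Finset.card_union_of_disjoint, C, C]
    rw [Finset.disjoint_filter]
    rintro X hX ⟨h0, -⟩ ⟨h1, -⟩
    omega
  omega

/-- recombination facts -/
lemma recomb {w Y T : List (Fin b)} (hw : w ≠ []) (hsuf : w <:+ Y)
    (hpre : w.drop 1 <+: T) :
    (Y ++ T.drop (w.length - 1)).take Y.length = Y ∧
      (Y ++ T.drop (w.length - 1)).drop (Y.length - w.length + 1) = T := by
  have hp : 1 ≤ w.length := List.length_pos_iff.mpr hw
  have hpa : w.length ≤ Y.length := hsuf.length_le
  refine ⟨List.take_left, ?_⟩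
  rw [List.drop_append,
    show Y.length - w.length + 1 - Y.length = 0 by omega, List.drop_zero]
  have h1 : Y.drop (Y.length - w.length + 1) = w.drop 1 := by
    have hYd : w = Y.drop (Y.length - w.length) := List.suffix_iff_eq_drop.mp hsuf
    rw [show Y.length - w.length + 1 = (Y.length - w.length) + 1 from rfl,
      ← List.drop_drop, ← hYd]
  rw [h1]
  have h2 := List.prefix_iff_eq_append.mp hpre
  rw [List.length_drop] at h2
  exact h2

/-- THE MASTER DECOMPOSITION: splitting at the first occurrence. -/
lemma master {w : List (Fin b)} (hw : w ≠ []) {x : List (Fin b)}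
    (hx : x.length < w.length) (k l : ℕ) :
    C b w x [] (k + 1) l =
      ∑ ac ∈ Finset.HasAntidiagonal.antidiagonal (l + (w.length - 1)),
        C b w x w 1 ac.1 * C b w (w.drop 1) [] k ac.2 := by
  have hp : 1 ≤ w.length := List.length_pos_iff.mpr hw
  set S := (strs b l).filter
    (fun X => occCount w X = k + 1 ∧ x <+: X ∧ [] <:+ X) with hS
  -- basic facts about members of S
  have hSfact : ∀ X ∈ S, X.length = l ∧ occCount w X = k + 1 ∧ x <+: X := by
    intro X hX
    simp only [hS, Finset.mem_filter] at hX
    exact ⟨mem_strs.mp hX.1, hX.2.1, hX.2.2.1⟩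
  have hminfact : ∀ X ∈ S, occP w X (minOcc w X) ∧ minOcc w X + w.length ≤ l := by
    intro X hX
    obtain ⟨hlen, hocc, -⟩ := hSfact X hX
    have h0 : occCount w X ≠ 0 := by omega
    have h1 := minOcc_occP hw h0
    have h2 := occP_le hw h1
    exact ⟨h1, by omega⟩
  have stepA : S.card = ∑ ac ∈ Finset.HasAntidiagonal.antidiagonal (l + (w.length - 1)),
      (S.filter (fun X => (minOcc w X + w.length, l - minOcc w X - 1) = ac)).card := by
    apply Finset.card_eq_sum_card_fiberwise
    intro X hX
    obtain ⟨h1, h2⟩ := hminfact X hX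
    simp only [Finset.mem_coe, Finset.HasAntidiagonal.mem_antidiagonal]
    omega
  have stepB : ∀ ac ∈ Finset.HasAntidiagonal.antidiagonal (l + (w.length - 1)),
      (S.filter (fun X => (minOcc w X + w.length, l - minOcc w X - 1) = ac)).card
        = C b w x w 1 ac.1 * C b w (w.drop 1) [] k ac.2 := by
    rintro ⟨a, c⟩ hac
    rw [Finset.HasAntidiagonal.mem_antidiagonal] at hac
    simp only at hac ⊢
    rw [C, C, ← Finset.card_product]
    apply Finset.card_nbij' (fun X => (X.take a, X.drop (a - w.length + 1)))
      (fun YT => YT.1 ++ YT.2.drop (w.length - 1))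
    -- forward membership
    · intro X hX
      simp only [Finset.mem_coe, Finset.mem_filter, Prod.mk.injEq] at hX
      obtain ⟨hXS, hfib1, hfib2⟩ := hX
      obtain ⟨hlen, hocc, hpre⟩ := hSfact X hXS
      obtain ⟨hmocc, hmle⟩ := hminfact X hXS
      set i0 := minOcc w X with hi0
      have hai : a = i0 + w.length := hfib1.symm
      have hci : c = l - i0 - 1 := hfib2.symm
      -- occurrences of the take are exactly {i0}
      have hocctake : occCount w (X.take (i0 + w.length)) = 1 := by
        rw [occCount_eq_card hw (X.take (i0 + w.length)) (n := i0 + w.length)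
          (by rw [List.length_take]; exact inf_le_left)]
        have hfilt : (Finset.range (i0 + w.length)).filter
            (occP w (X.take (i0 + w.length))) = {i0} := by
          apply Finset.ext
          intro j
          simp only [Finset.mem_coe, Finset.mem_filter, Finset.mem_range, Finset.mem_singleton]
          constructor
          · rintro ⟨h1, h2⟩
            have h3 := occP_take_le hw h2
            have h4 : occP w X j := (occP_take_iff h3).mp h2
            have h5 := minOcc_le h4
            omega
          · intro h; subst h
            exact ⟨by omega, (occP_take_iff le_rfl).mpr hmocc⟩
        rw [hfilt, Finset.card_singleton]
      have hoccdrop : occCount w (X.drop (i0 + 1)) = k := by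
        have := occ_split hw X (i := i0) (by omega)
        rw [hocc, hocctake] at this
        omega
      simp only [Finset.mem_coe, Finset.mem_product, Finset.mem_filter]
      refine ⟨⟨mem_strs.mpr (by rw [List.length_take]; omega), ?_, ?_, ?_⟩,
        ⟨mem_strs.mpr (by rw [List.length_drop]; omega), ?_, ?_, List.nil_suffix⟩⟩
      · rw [hai]; exact hocctake
      · rw [hai]
        exact List.prefix_take_iff.mpr ⟨hpre, by omega⟩
      · -- w <:+ X.take a
        have h1 : (X.take (i0 + w.length)).drop i0 = w := by
          rw [List.drop_take, show i0 + w.length - i0 = w.length by omega]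
          exact hmocc
        rw [hai]
        have h2 := List.drop_suffix i0 (X.take (i0 + w.length))
        rwa [h1] at h2
      · rw [show a - w.length + 1 = i0 + 1 by omega]
        exact hoccdrop
      · -- w.drop 1 <+: X.drop (a - w.length + 1)
        rw [show a - w.length + 1 = i0 + 1 by omega]
        have key : (X.drop (i0 + 1)).take (w.length - 1) = w.drop 1 := by
          have e1 : X.drop (i0 + 1) = (X.drop i0).drop 1 := List.drop_drop.symm
          rw [e1, List.take_drop, show 1 + (w.length - 1) = w.length by omega, hmocc]
        apply List.prefix_iff_eq_take.mpr
        rw [List.length_drop]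
        exact key.symm
    -- backward membership
    · rintro ⟨Y, T⟩ hYT
      simp only [Finset.mem_coe, Finset.mem_product, Finset.mem_filter] at hYT
      obtain ⟨⟨hYs, hYocc, hYpre, hYsuf⟩, ⟨hTs, hTocc, hTpre, -⟩⟩ := hYT
      have hYlen : Y.length = a := mem_strs.mp hYs
      have hTlen : T.length = c := mem_strs.mp hTs
      have hpa : w.length ≤ a := by have := hYsuf.length_le; omega
      have hpc : w.length - 1 ≤ c := by
        have := hTpre.length_le
        rw [List.length_drop] at this
        omega
      obtain ⟨htake, hdrop⟩ := recomb hw hYsuf hTpre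
      rw [hYlen] at htake hdrop
      have hXlen : (Y ++ T.drop (w.length - 1)).length = l := by
        rw [List.length_append, List.length_drop]
        omega
      have hoccY' : occP w Y (a - w.length) := by
        have h1 : w = Y.drop (Y.length - w.length) := List.suffix_iff_eq_drop.mp hYsuf
        rw [hYlen] at h1
        show (Y.drop (a - w.length)).take w.length = w
        rw [← h1]
        exact List.take_of_length_le le_rfl
      have hoccPX : occP w (Y ++ T.drop (w.length - 1)) (a - w.length) := by
        have h2 : occP w ((Y ++ T.drop (w.length - 1)).take a) (a - w.length) := by
          rw [htake]; exact hoccY'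
        exact (occP_take_iff (by omega)).mp h2
      have hoccX : occCount w (Y ++ T.drop (w.length - 1)) = k + 1 := by
        have := occ_split hw (Y ++ T.drop (w.length - 1)) (i := a - w.length)
          (by rw [hXlen]; omega)
        rw [show a - w.length + w.length = a by omega, htake, hdrop, hYocc, hTocc] at this
        omega
      have hmin : minOcc w (Y ++ T.drop (w.length - 1)) = a - w.length := by
        have hle : minOcc w (Y ++ T.drop (w.length - 1)) ≤ a - w.length :=
          minOcc_le hoccPX
        have hge : a - w.length ≤ minOcc w (Y ++ T.drop (w.length - 1)) := by
          by_contra hcon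
          push_neg at hcon
          have h0 : occCount w (Y ++ T.drop (w.length - 1)) ≠ 0 := by omega
          have h1 := minOcc_occP hw h0
          have h2 : occP w ((Y ++ T.drop (w.length - 1)).take a)
              (minOcc w (Y ++ T.drop (w.length - 1))) :=
            (occP_take_iff (by omega)).mpr h1
          rw [htake] at h2
          have := occ_unique hw hYocc h2 hoccY'
          omega
        omega
      simp only [Finset.mem_coe, Finset.mem_filter, Prod.mk.injEq, hS]
      refine ⟨⟨mem_strs.mpr hXlen, hoccX,
        hYpre.trans (List.prefix_append Y _), List.nil_suffix⟩, ?_, ?_⟩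
      · rw [hmin]; omega
      · rw [hmin]; omega
    -- left inverse
    · intro X hX
      simp only [Finset.mem_coe, Finset.mem_filter, Prod.mk.injEq] at hX
      obtain ⟨hXS, hfib1, hfib2⟩ := hX
      simp only
      rw [List.drop_drop, show a - w.length + 1 + (w.length - 1) = a by omega,
        List.take_append_drop]
    -- right inverse
    · rintro ⟨Y, T⟩ hYT
      simp only [Finset.mem_coe, Finset.mem_product, Finset.mem_filter] at hYT
      obtain ⟨⟨hYs, hYocc, hYpre, hYsuf⟩, ⟨hTs, hTocc, hTpre, -⟩⟩ := hYT
      have hYlen : Y.length = a := mem_strs.mp hYs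
      obtain ⟨htake, hdrop⟩ := recomb hw hYsuf hTpre
      rw [hYlen] at htake hdrop
      simp only [Prod.mk.injEq]
      exact ⟨htake, hdrop⟩
  exact stepA.trans (Finset.sum_congr rfl stepB)

/-! ### power series -/

noncomputable def Cser (b : ℕ) (w x y : List (Fin b)) (k : ℕ) : PowerSeries ℚ :=
  PowerSeries.mk fun l => (C b w x y k l : ℚ)

lemma Zser_eq_Cser (b : ℕ) (w x y : List (Fin b)) (k : ℕ) :
    Zser b w x y k = Cser b w x y k := by
  apply PowerSeries.ext
  intro n
  rw [Zser, Cser, PowerSeries.coeff_mk, PowerSeries.coeff_mk, Nxy_eq_C]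

lemma coeff_X_pow_mul'' (f : PowerSeries ℚ) (d n : ℕ) :
    (PowerSeries.coeff n) ((X : PowerSeries ℚ) ^ d * f) =
      if d ≤ n then (PowerSeries.coeff (n - d)) f else 0 := by
  rw [mul_comm, PowerSeries.coeff_mul_X_pow']

variable {b : ℕ} {w : List (Fin b)}

lemma smaster (hw : w ≠ []) {x : List (Fin b)} (hx : x.length < w.length) (k : ℕ) :
    (X : PowerSeries ℚ) ^ (w.length - 1) * Cser b w x [] (k + 1) =
      Cser b w x w 1 * Cser b w (w.drop 1) [] k := by
  have hp : 1 ≤ w.length := List.length_pos_iff.mpr hw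
  apply PowerSeries.ext
  intro n
  rw [coeff_X_pow_mul'', PowerSeries.coeff_mul]
  by_cases hn : w.length - 1 ≤ n
  · rw [if_pos hn]
    simp only [Cser, PowerSeries.coeff_mk]
    have hm := master hw hx k (n - (w.length - 1))
    rw [show n - (w.length - 1) + (w.length - 1) = n by omega] at hm
    rw [hm, Nat.cast_sum]
    apply Finset.sum_congr rfl
    intro ac hac
    push_cast
    ring
  · rw [if_neg hn]
    symm
    apply Finset.sum_eq_zero
    rintro ⟨a, c⟩ hac
    rw [Finset.HasAntidiagonal.mem_antidiagonal] at hac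
    simp only [Cser, PowerSeries.coeff_mk]
    have h0 : C b w x w 1 a = 0 := C_eq_zero_of_lt_suffix (by omega)
    simp [h0]

lemma sW (hw : w ≠ []) {x : List (Fin b)} (hx : x.length < w.length) :
    Cser b w x w 1 = (X : PowerSeries ℚ) * Cser b w x (w.take (w.length - 1)) 0 := by
  have hp : 1 ≤ w.length := List.length_pos_iff.mpr hw
  apply PowerSeries.ext
  intro n
  cases n with
  | zero =>
    rw [PowerSeries.coeff_zero_X_mul]
    simp only [Cser, PowerSeries.coeff_mk]
    rw [C_eq_zero_of_lt_suffix (by omega : 0 < w.length)]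
    exact Nat.cast_zero
  | succ n =>
    rw [PowerSeries.coeff_succ_X_mul]
    simp only [Cser, PowerSeries.coeff_mk]
    rw [C_drop_last hw hx n]

lemma sE (hb : 0 < b) (hw : w ≠ []) :
    Cser b w [] (w.take (w.length - 1)) 0 = Cser b w (w.drop 1) [] 0 := by
  apply PowerSeries.ext
  intro n
  simp only [Cser, PowerSeries.coeff_mk]
  have h1 := snoc_count hb hw n
  have h2 := cons_count hb hw n
  have h3 := C_drop_last hw (x := ([] : List (Fin b))) (List.length_pos_iff.mpr hw) n
  have h4 := C_drop_head hw n
  have : C b w [] (w.take (w.length - 1)) 0 n = C b w (w.drop 1) [] 0 n := by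
    omega
  rw [this]

end Stmt9

open Stmt9 in
/-- `Z_w(k) = t^{2-p} (t^{2-p} Z_w(v,0,u))^{k-1} Z_w(v,0)^2` for `k ≥ 1` (stated
multiplied through by `t^{pk}` to avoid negative exponents):
`t^{pk} Z_w(k) = t^{2k} Z_w(v,0,u)^{k-1} Z_w(v,0)^2`. -/
theorem stmt9 (b : ℕ) (hb : 1 < b) (w : List (Fin b)) (hw : 1 ≤ w.length)
    (k : ℕ) (hk : 1 ≤ k) :
    (X : PowerSeries ℚ) ^ (w.length * k) * Zser b w [] [] k =
      X ^ (2 * k) * Zser b w (w.drop 1) (w.take (w.length - 1)) 0 ^ (k - 1) *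
        Zser b w (w.drop 1) [] 0 ^ 2 := by
  have hw' : w ≠ [] := by
    intro h; rw [h] at hw; simp at hw
  have hb0 : 0 < b := by omega
  have hx0 : ([] : List (Fin b)).length < w.length := by
    simpa using List.length_pos_iff.mpr hw'
  have hxv : (w.drop 1).length < w.length := by
    rw [List.length_drop]; omega
  rw [Zser_eq_Cser, Zser_eq_Cser, Zser_eq_Cser]
  -- the recursion for V_k
  have hVk : ∀ m : ℕ, (X : PowerSeries ℚ) ^ ((w.length - 1) * m) * Cser b w (w.drop 1) [] m
      = X ^ m * Cser b w (w.drop 1) (w.take (w.length - 1)) 0 ^ m *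
          Cser b w (w.drop 1) [] 0 := by
    intro m
    induction m with
    | zero => simp
    | succ m ih =>
      have hrec : (X : PowerSeries ℚ) ^ (w.length - 1) * Cser b w (w.drop 1) [] (m + 1)
          = (X * Cser b w (w.drop 1) (w.take (w.length - 1)) 0) * Cser b w (w.drop 1) [] m := by
        rw [smaster hw' hxv m, sW hw' hxv]
      calc (X : PowerSeries ℚ) ^ ((w.length - 1) * (m + 1)) * Cser b w (w.drop 1) [] (m + 1)
          = X ^ ((w.length - 1) * m) *
              (X ^ (w.length - 1) * Cser b w (w.drop 1) [] (m + 1)) := by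
            rw [Nat.mul_succ, pow_add]; ring
        _ = (X * Cser b w (w.drop 1) (w.take (w.length - 1)) 0) *
              (X ^ ((w.length - 1) * m) * Cser b w (w.drop 1) [] m) := by
            rw [hrec]; ring
        _ = (X * Cser b w (w.drop 1) (w.take (w.length - 1)) 0) *
              (X ^ m * Cser b w (w.drop 1) (w.take (w.length - 1)) 0 ^ m *
                Cser b w (w.drop 1) [] 0) := by rw [ih]
        _ = X ^ (m + 1) * Cser b w (w.drop 1) (w.take (w.length - 1)) 0 ^ (m + 1) *
              Cser b w (w.drop 1) [] 0 := by ring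
  obtain ⟨k', rfl⟩ : ∃ k', k = k' + 1 := ⟨k - 1, by omega⟩
  have hmain : (X : PowerSeries ℚ) ^ (w.length - 1) * Cser b w [] [] (k' + 1)
      = (X * Cser b w (w.drop 1) [] 0) * Cser b w (w.drop 1) [] k' := by
    rw [smaster hw' hx0 k', sW hw' hx0, sE hb0 hw']
  have hexp : w.length * (k' + 1) = (w.length - 1) * k' + (k' + 1) + (w.length - 1) := by
    have hq : w.length = (w.length - 1) + 1 := by omega
    calc w.length * (k' + 1) = ((w.length - 1) + 1) * (k' + 1) := by rw [← hq]
      _ = (w.length - 1) * k' + (k' + 1) + (w.length - 1) := by ring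
  rw [hexp, show (k' + 1) - 1 = k' by omega]
  calc (X : PowerSeries ℚ) ^ ((w.length - 1) * k' + (k' + 1) + (w.length - 1)) *
        Cser b w [] [] (k' + 1)
      = X ^ ((w.length - 1) * k') * X ^ (k' + 1) *
          (X ^ (w.length - 1) * Cser b w [] [] (k' + 1)) := by
        rw [pow_add, pow_add]; ring
    _ = X ^ ((w.length - 1) * k') * X ^ (k' + 1) *
          ((X * Cser b w (w.drop 1) [] 0) * Cser b w (w.drop 1) [] k') := by rw [hmain]
    _ = X ^ (k' + 1) * X * Cser b w (w.drop 1) [] 0 *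
          (X ^ ((w.length - 1) * k') * Cser b w (w.drop 1) [] k') := by ring
    _ = X ^ (k' + 1) * X * Cser b w (w.drop 1) [] 0 *
          (X ^ k' * Cser b w (w.drop 1) (w.take (w.length - 1)) 0 ^ k' *
            Cser b w (w.drop 1) [] 0) := by rw [hVk k']
    _ = X ^ (2 * (k' + 1)) * Cser b w (w.drop 1) (w.take (w.length - 1)) 0 ^ k' *
          Cser b w (w.drop 1) [] 0 ^ 2 := by ring
end

section
/- For every k ≥ 1, the total mass of k-admissible strings equals b^p; that is, Σ_l N_w(k,l) b^{-l} = b^{|w|}. -/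
open scoped BigOperators

/-- `Nw b w k l`: the number of strings of length `l` over `{0,…,b-1}` containing
exactly `k` occurrences of `w`. -/
def Nw (b : ℕ) (w : List (Fin b)) (k l : ℕ) : ℕ :=
  Fintype.card {f : Fin l → Fin b // occCount w (List.ofFn f) = k}

namespace S10
variable {α : Type*} [DecidableEq α]

lemma occ_nil (w : List α) : occCount w [] = 0 := by simp [occCount]

lemma occ_eq_countP (w X : List α) :
    occCount w X = (List.range X.length).countP (fun i => decide ((X.drop i).take w.length = w)) := by
  rw [occCount, List.countP_eq_length_filter]

lemma occ_cons (w : List α) (a : α) (X : List α) :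
    occCount w (a :: X) = (if (a :: X).take w.length = w then 1 else 0) + occCount w X := by
  rw [occ_eq_countP, occ_eq_countP]
  rw [List.length_cons, List.range_succ_eq_map, List.countP_cons, List.countP_map]
  simp only [List.drop_succ_cons, List.drop_zero, Function.comp]
  rcases Classical.em ((a :: X).take w.length = w) with h | h <;> simp [h, Nat.add_comm]
  · rfl
  · rfl

lemma take_eq_imp_le {w X : List α} (h : X.take w.length = w) : w.length ≤ X.length := by
  have := congrArg List.length h
  simp only [List.length_take] at this
  omega

lemma occ_short {w X : List α} (h : X.length < w.length) : occCount w X = 0 := by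
  induction X with
  | nil => simp [occ_nil]
  | cons a X ih =>
    rw [occ_cons]
    have h1 : ¬ ((a :: X).take w.length = w) := fun hc => by
      have := take_eq_imp_le hc; simp at this h; omega
    rw [if_neg h1, ih (by simp at h ⊢; omega)]

lemma occ_self {w : List α} (hw : w ≠ []) : occCount w w = 1 := by
  obtain ⟨a, t, rfl⟩ := List.exists_cons_of_ne_nil hw
  rw [occ_cons, if_pos List.take_length, occ_short (by simp)]

lemma occ_append_left_le (w X Z : List α) : occCount w X ≤ occCount w (X ++ Z) := by
  induction X with
  | nil => simp [occ_nil]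
  | cons a X ih =>
    rw [occ_cons, List.cons_append, occ_cons]
    have : (if (a :: X).take w.length = w then 1 else 0) ≤
        (if (a :: (X ++ Z)).take w.length = w then 1 else 0) := by
      rcases Classical.em ((a :: X).take w.length = w) with h | h
      · rw [if_pos h, if_pos]
        rw [show (a :: (X ++ Z)) = (a :: X) ++ Z by simp,
          List.take_append_of_le_length (take_eq_imp_le h), h]
      · rw [if_neg h]; split <;> omega
    omega

lemma occ_append_right_le (w c V : List α) : occCount w V ≤ occCount w (c ++ V) := by
  induction c with
  | nil => simp
  | cons a c ih => rw [List.cons_append, occ_cons]; omega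

lemma occ_append_ends (w : List α) (hw : w ≠ []) (U₀ V : List α) :
    occCount w ((U₀ ++ w) ++ V) = occCount w (U₀ ++ w) + occCount w (w.drop 1 ++ V) := by
  induction U₀ with
  | nil =>
    obtain ⟨a, t, hw'⟩ := List.exists_cons_of_ne_nil hw
    subst hw'
    simp only [List.nil_append]
    rw [occ_self hw, List.drop_one, List.tail_cons, List.cons_append, occ_cons, if_pos]
    rw [show a :: (t ++ V) = (a :: t) ++ V by simp,
      List.take_append_of_le_length (le_refl _), List.take_length]
  | cons a U₀ ih =>
    have h1 : w.length ≤ (a :: (U₀ ++ w)).length := by simp; omega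
    simp only [List.cons_append, occ_cons]
    rw [show a :: (U₀ ++ w ++ V) = (a :: (U₀ ++ w)) ++ V by simp,
      List.take_append_of_le_length h1]
    rw [ih]
    omega

lemma occ_ends_pos (w : List α) (hw : w ≠ []) (U₀ : List α) : 1 ≤ occCount w (U₀ ++ w) := by
  have := occ_append_right_le w U₀ w
  rw [occ_self hw] at this; omega

end S10

namespace S10
variable {α : Type*} [DecidableEq α]

lemma occ_concat (w : List α) (hw : w ≠ []) (Y : List α) (a : α) :
    occCount w (Y ++ [a]) = occCount w Y ∨
      (occCount w (Y ++ [a]) = occCount w Y + 1 ∧ ∃ U₀, Y ++ [a] = U₀ ++ w) := by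
  induction Y with
  | nil =>
    rw [List.nil_append, occ_cons, occ_nil]
    rcases Classical.em ([a].take w.length = w) with h | h
    · right
      refine ⟨by rw [if_pos h], ⟨[], ?_⟩⟩
      have h1 := take_eq_imp_le h
      simp only [List.length_singleton] at h1
      have h2 : w.length = 1 := by
        have := List.length_pos_iff.mpr hw; omega
      rw [List.nil_append, ← h, h2]
      simp
    · left; rw [if_neg h]
  | cons c Y' ih =>
    rw [List.cons_append, occ_cons, occ_cons]
    rcases le_or_gt w.length (c :: Y').length with hlen | hlen
    · have hiff : ((c :: (Y' ++ [a])).take w.length = w) ↔ ((c :: Y').take w.length = w) := by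
        rw [show c :: (Y' ++ [a]) = (c :: Y') ++ [a] by simp,
          List.take_append_of_le_length hlen]
      rcases ih with ⟨h1⟩ | ⟨h1, U₀, h2⟩
      · left; rw [h1]; rcases Classical.em ((c :: Y').take w.length = w) with h | h
        · rw [if_pos h, if_pos (hiff.mpr h)]
        · rw [if_neg h, if_neg (fun hc => h (hiff.mp hc))]
      · right
        constructor
        · rw [h1]; rcases Classical.em ((c :: Y').take w.length = w) with h | h
          · rw [if_pos h, if_pos (hiff.mpr h)]; omega
          · rw [if_neg h, if_neg (fun hc => h (hiff.mp hc))]; omega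
        · exact ⟨c :: U₀, by rw [List.cons_append, h2]⟩
    · -- c :: Y' shorter than w
      have h2 : ¬ ((c :: Y').take w.length = w) := fun hc => by
        have := take_eq_imp_le hc; omega
      have hY' : occCount w Y' = 0 := occ_short (by simp at hlen ⊢; omega)
      have hY'a : occCount w (Y' ++ [a]) = occCount w Y' ∨
          occCount w (Y' ++ [a]) = occCount w Y' + 1 ∧ ∃ U₀, Y' ++ [a] = U₀ ++ w := ih
      have hshort : occCount w (Y' ++ [a]) = 0 := by
        rcases hY'a with h | ⟨_, U₀, hU⟩
        · rw [h, hY']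
        · exfalso
          have := congrArg List.length hU
          simp only [List.length_append, List.length_singleton] at this
          simp only [List.length_cons] at hlen; omega
      rcases Classical.em ((c :: (Y' ++ [a])).take w.length = w) with h | h
      · right
        refine ⟨?_, ⟨[], ?_⟩⟩
        · rw [if_pos h, if_neg h2, hshort, hY']
        · have h3 := take_eq_imp_le h
          have h5 : w.length = (c :: (Y' ++ [a])).length := by
            simp only [List.length_cons, List.length_append, List.length_singleton,
              List.length_nil] at h3 hlen ⊢
            omega
          rw [List.nil_append, ← h, h5, List.take_length]
      · left; rw [if_neg h, if_neg h2, hshort, hY']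

lemma occ_dropLast (w : List α) (hw : w ≠ []) (X : List α) (hX : X ≠ []) :
    occCount w X = occCount w X.dropLast ∨
      (occCount w X = occCount w X.dropLast + 1 ∧ ∃ U₀, X = U₀ ++ w) := by
  have h := occ_concat w hw X.dropLast (X.getLast hX)
  rwa [List.dropLast_append_getLast hX] at h

lemma occ_pos_iff (w X : List α) :
    0 < occCount w X ↔ ∃ i, i < X.length ∧ (X.drop i).take w.length = w := by
  rw [occ_eq_countP, List.countP_pos_iff]
  simp [List.mem_range]

end S10

namespace S10
set_option linter.unusedSectionVars false

def Strs (b n : ℕ) : Finset (List (Fin b)) :=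
  (Finset.univ : Finset (Fin n → Fin b)).image List.ofFn

lemma mem_Strs {b n : ℕ} {X : List (Fin b)} : X ∈ Strs b n ↔ X.length = n := by
  simp only [Strs, Finset.mem_image, Finset.mem_univ, true_and]
  constructor
  · rintro ⟨f, rfl⟩; simp
  · rintro rfl; exact ⟨X.get, List.ofFn_get X⟩

lemma card_Strs (b n : ℕ) : (Strs b n).card = b ^ n := by
  rw [Strs, Finset.card_image_of_injective _ List.ofFn_injective]
  simp [Fintype.card_fun]

def cnt (b n : ℕ) (P : List (Fin b) → Prop) [DecidablePred P] : ℕ :=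
  ((Strs b n).filter P).card

lemma cnt_congr {b n : ℕ} {P Q : List (Fin b) → Prop} [DecidablePred P] [DecidablePred Q]
    (h : ∀ X : List (Fin b), X.length = n → (P X ↔ Q X)) : cnt b n P = cnt b n Q := by
  unfold cnt
  congr 1
  apply Finset.filter_congr
  intro X hX
  simpa using h X (mem_Strs.mp hX)

lemma cnt_le_pow {b n : ℕ} (P : List (Fin b) → Prop) [DecidablePred P] : cnt b n P ≤ b ^ n :=
  (Finset.card_filter_le _ _).trans_eq (card_Strs b n)

lemma cnt_true (b n : ℕ) : cnt b n (fun _ => True) = b ^ n := by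
  rw [cnt, Finset.filter_true, card_Strs]

lemma cnt_mono {b n : ℕ} {P Q : List (Fin b) → Prop} [DecidablePred P] [DecidablePred Q]
    (h : ∀ X : List (Fin b), X.length = n → P X → Q X) : cnt b n P ≤ cnt b n Q := by
  apply Finset.card_le_card
  intro X hX
  rw [Finset.mem_filter] at hX ⊢
  exact ⟨hX.1, h X (mem_Strs.mp hX.1) hX.2⟩

lemma cnt_eq_zero {b n : ℕ} {P : List (Fin b) → Prop} [DecidablePred P]
    (h : ∀ X : List (Fin b), X.length = n → ¬ P X) : cnt b n P = 0 := by
  rw [cnt, Finset.card_eq_zero, Finset.filter_eq_empty_iff]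
  intro X hX
  exact h X (mem_Strs.mp hX)

lemma cnt_add_compl {b n : ℕ} (P : List (Fin b) → Prop) [DecidablePred P] :
    cnt b n P + cnt b n (fun X => ¬ P X) = b ^ n := by
  rw [cnt, cnt, Finset.card_filter_add_card_filter_not, card_Strs]

lemma cnt_split {b : ℕ} (l : ℕ) (P Q R : List (Fin b) → Prop)
    [DecidablePred P] [DecidablePred Q] [DecidablePred R]
    (hPQR : ∀ X : List (Fin b), X.length = l →
      (P X ↔ ∃ m, m ≤ l ∧ Q (X.take m) ∧ R (X.drop m)))
    (huniq : ∀ X : List (Fin b), X.length = l → ∀ m₁ m₂, m₁ ≤ l → m₂ ≤ l →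
      Q (X.take m₁) → R (X.drop m₁) → Q (X.take m₂) → R (X.drop m₂) → m₁ = m₂) :
    cnt b l P = ∑ m ∈ Finset.range (l+1), cnt b m Q * cnt b (l-m) R := by
  classical
  have hmem : ∀ m, m ≤ l → ∀ X : List (Fin b),
      (X ∈ ((((Strs b m).filter Q) ×ˢ ((Strs b (l-m)).filter R)).image
        (fun uv : List (Fin b) × List (Fin b) => uv.1 ++ uv.2)) ↔
      (X.length = l ∧ Q (X.take m) ∧ R (X.drop m))) := by
    intro m hm X
    simp only [Finset.mem_image, Finset.mem_product, Finset.mem_filter, mem_Strs, Prod.exists]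
    constructor
    · rintro ⟨u, v, ⟨⟨hu, hQ⟩, hv, hR⟩, rfl⟩
      subst hu
      refine ⟨by simp [hv]; omega, ?_, ?_⟩
      · rw [List.take_left]; exact hQ
      · rw [List.drop_left]; exact hR
    · rintro ⟨hlen, hQ, hR⟩
      refine ⟨X.take m, X.drop m, ⟨⟨?_, hQ⟩, ?_, hR⟩, List.take_append_drop m X⟩
      · simp [hlen]; omega
      · simp [hlen]
  have hset : (Strs b l).filter P = (Finset.range (l+1)).biUnion
      (fun m => (((Strs b m).filter Q) ×ˢ ((Strs b (l-m)).filter R)).image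
        (fun uv : List (Fin b) × List (Fin b) => uv.1 ++ uv.2)) := by
    ext X
    simp only [Finset.mem_filter, mem_Strs, Finset.mem_biUnion, Finset.mem_range]
    constructor
    · rintro ⟨hlen, hP⟩
      obtain ⟨m, hm, hQ, hR⟩ := (hPQR X hlen).mp hP
      exact ⟨m, by omega, (hmem m hm X).mpr ⟨hlen, hQ, hR⟩⟩
    · rintro ⟨m, hm, hX⟩
      obtain ⟨hlen, hQ, hR⟩ := (hmem m (by omega) X).mp hX
      exact ⟨hlen, (hPQR X hlen).mpr ⟨m, by omega, hQ, hR⟩⟩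
  rw [cnt, hset, Finset.card_biUnion]
  · apply Finset.sum_congr rfl
    intro m hm
    rw [Finset.mem_range] at hm
    rw [Finset.card_image_of_injOn, Finset.card_product, cnt, cnt]
    rintro ⟨u, v⟩ hu ⟨u', v'⟩ hv huv
    simp only [Finset.mem_coe, Finset.mem_product, Finset.mem_filter, mem_Strs] at hu hv
    simp only at huv
    have := List.append_inj huv (hu.1.1.trans hv.1.1.symm)
    simp [Prod.ext_iff, this.1, this.2]
  · intro m₁ h₁ m₂ h₂ hne
    rw [Finset.mem_coe, Finset.mem_range] at h₁ h₂
    rw [Function.onFun_apply, Finset.disjoint_left]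
    intro X hX1 hX2
    obtain ⟨hlen, hQ1, hR1⟩ := (hmem m₁ (by omega) X).mp hX1
    obtain ⟨_, hQ2, hR2⟩ := (hmem m₂ (by omega) X).mp hX2
    exact hne (huniq X hlen m₁ m₂ (by omega) (by omega) hQ1 hR1 hQ2 hR2)

lemma cnt_prepend {b : ℕ} (n : ℕ) (w : List (Fin b)) (S : List (Fin b) → Prop)
    [DecidablePred S] (hpn : w.length ≤ n) :
    cnt b n (fun v => v.take w.length = w ∧ S (v.drop w.length)) = cnt b (n - w.length) S := by
  classical
  rw [cnt, cnt]
  rw [show (Strs b n).filter (fun v => v.take w.length = w ∧ S (v.drop w.length)) =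
      ((Strs b (n - w.length)).filter S).image (fun u => w ++ u) from ?_]
  · rw [Finset.card_image_of_injective]
    intro u v huv
    exact List.append_cancel_left huv
  · ext v
    simp only [Finset.mem_filter, mem_Strs, Finset.mem_image]
    constructor
    · rintro ⟨hlen, htake, hS⟩
      refine ⟨v.drop w.length, ⟨by simp [hlen], hS⟩, ?_⟩
      conv_rhs => rw [← List.take_append_drop w.length v, htake]
    · rintro ⟨u, ⟨hu, hS⟩, rfl⟩
      refine ⟨by simp [hu]; omega, by rw [List.take_left], by rw [List.drop_left]; exact hS⟩

end S10

namespace S10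
variable {α : Type*} [DecidableEq α]
set_option linter.unusedSectionVars false

lemma dropLast_take {V : List α} {m : ℕ} (hm : m ≤ V.length) :
    (V.take m).dropLast = V.take (m-1) := by
  rw [List.dropLast_eq_take, List.take_take, List.length_take]
  congr 1
  omega

lemma first_split (w : List α) (hw : w ≠ []) (c V : List α) (hc : occCount w c = 0)
    (hpos : 0 < occCount w (c ++ V)) :
    ∃ m, m ≤ V.length ∧
      (occCount w (c ++ V.take m) = 1 ∧ occCount w (c ++ (V.take m).dropLast) = 0) ∧
      occCount w (c ++ V) = 1 + occCount w (w.drop 1 ++ V.drop m) := by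
  have h : ∃ m, 0 < occCount w (c ++ V.take m) :=
    ⟨V.length, by rw [List.take_length]; exact hpos⟩
  classical
  set m := Nat.find h with hmdef
  have hm : 0 < occCount w (c ++ V.take m) := Nat.find_spec h
  have hmle : m ≤ V.length := Nat.find_min' h (show 0 < occCount w (c ++ V.take V.length) by
    rw [List.take_length]; exact hpos)
  have hm0 : m ≠ 0 := by
    intro h0
    rw [h0, List.take_zero, List.append_nil] at hm
    omega
  have hprev : occCount w (c ++ V.take (m-1)) = 0 := by
    have := Nat.find_min h (show m - 1 < m by omega)
    omega
  have htk : V.take m ≠ [] := by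
    intro hcon
    have := congrArg List.length hcon
    simp only [List.length_take, List.length_nil] at this
    omega
  have hX : c ++ V.take m ≠ [] := fun hcon => htk (by
    rcases List.append_eq_nil_iff.mp hcon with ⟨_, h2⟩; exact h2)
  have hdl : (c ++ V.take m).dropLast = c ++ V.take (m-1) := by
    rw [List.dropLast_append_of_ne_nil htk, dropLast_take hmle]
  rcases occ_dropLast w hw _ hX with hcase | ⟨hcount, U₀, hU⟩
  · rw [hdl, hprev] at hcase; omega
  · rw [hdl, hprev] at hcount
    refine ⟨m, hmle, ⟨by omega, by rw [dropLast_take hmle]; exact hprev⟩, ?_⟩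
    have hsplit : c ++ V = (c ++ V.take m) ++ V.drop m := by
      rw [List.append_assoc, List.take_append_drop]
    have hfin : occCount w (c ++ V) =
        occCount w (c ++ V.take m) + occCount w (w.drop 1 ++ V.drop m) := by
      rw [hsplit, hU, occ_append_ends w hw, ← hU]
    omega

lemma first_split_unique (w : List α) (hw : w ≠ []) (c V : List α) (hc : occCount w c = 0)
    (m₁ m₂ : ℕ) (h₁ : m₁ ≤ V.length) (h₂ : m₂ ≤ V.length)
    (hQ1 : occCount w (c ++ V.take m₁) = 1 ∧ occCount w (c ++ (V.take m₁).dropLast) = 0)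
    (hQ2 : occCount w (c ++ V.take m₂) = 1 ∧ occCount w (c ++ (V.take m₂).dropLast) = 0) :
    m₁ = m₂ := by
  have key : ∀ m₁ m₂, m₁ ≤ V.length → m₂ ≤ V.length →
      occCount w (c ++ V.take m₁) = 1 → occCount w (c ++ (V.take m₂).dropLast) = 0 →
      ¬ (m₁ < m₂) := by
    intro n₁ n₂ hn₁ hn₂ hone hzero hlt
    rw [dropLast_take hn₂] at hzero
    have hdec : V.take (n₂ - 1) = V.take n₁ ++ (V.drop n₁).take (n₂ - 1 - n₁) := by
      rw [← List.take_add]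
      congr 1
      omega
    have hle : occCount w (c ++ V.take n₁) ≤ occCount w (c ++ V.take (n₂ - 1)) := by
      rw [hdec, ← List.append_assoc]
      exact occ_append_left_le _ _ _
    omega
  rcases lt_trichotomy m₁ m₂ with h | h | h
  · exact absurd h (key m₁ m₂ h₁ h₂ hQ1.1 hQ2.2)
  · exact h
  · exact absurd h (key m₂ m₁ h₂ h₁ hQ2.1 hQ1.2)

lemma occ_drop_succ (w : List α) (hw : w ≠ []) (X : List α) (s : ℕ)
    (hmatch : (X.drop s).take w.length = w) :
    X.drop (s+1) = w.drop 1 ++ X.drop (s + w.length) := by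
  have h1 : X.drop s = w ++ X.drop (s + w.length) := by
    conv_lhs => rw [← List.take_append_drop w.length (X.drop s)]
    rw [hmatch, List.drop_drop]
  have h2 : X.drop (s+1) = (X.drop s).drop 1 := by
    rw [List.drop_drop]
  rw [h2, h1, List.drop_append_of_le_length]
  exact List.length_pos_iff.mpr hw

lemma last_split (w : List α) (hw : w ≠ []) (X : List α) (hpos : 0 < occCount w X) :
    ∃ s, s ≤ X.length ∧ (X.drop s).take w.length = w ∧
      occCount w (w.drop 1 ++ X.drop (s + w.length)) = 0 := by
  classical
  obtain ⟨i, hi, hmi⟩ := (occ_pos_iff w X).mp hpos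
  set P' := fun t => (X.drop t).take w.length = w with hP'
  set s := Nat.findGreatest P' X.length with hsdef
  have hs : P' s := Nat.findGreatest_spec (le_of_lt hi) hmi
  have hsle : s ≤ X.length := Nat.findGreatest_le _
  have hsp : s + w.length ≤ X.length := by
    have := take_eq_imp_le hs
    rw [List.length_drop] at this
    omega
  have hwpos : 0 < w.length := List.length_pos_iff.mpr hw
  refine ⟨s, hsle, hs, ?_⟩
  by_contra hcon
  have hpos' : 0 < occCount w (w.drop 1 ++ X.drop (s + w.length)) := Nat.pos_of_ne_zero hcon
  obtain ⟨i', hi', hm'⟩ := (occ_pos_iff w _).mp hpos'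
  have heq : w.drop 1 ++ X.drop (s + w.length) = X.drop (s+1) := (occ_drop_succ w hw X s hs).symm
  rw [heq] at hm' hi'
  rw [List.length_drop] at hi'
  have hk : (X.drop (s+1+i')).take w.length = w := by
    rw [List.drop_drop] at hm'
    exact hm'
  exact Nat.findGreatest_is_greatest (show s < s+1+i' by omega) (by omega) hk

lemma last_split_unique (w : List α) (hw : w ≠ []) (X : List α)
    (s₁ s₂ : ℕ) (h₁ : s₁ ≤ X.length) (h₂ : s₂ ≤ X.length)
    (hR1 : (X.drop s₁).take w.length = w ∧ occCount w (w.drop 1 ++ X.drop (s₁ + w.length)) = 0)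
    (hR2 : (X.drop s₂).take w.length = w ∧ occCount w (w.drop 1 ++ X.drop (s₂ + w.length)) = 0) :
    s₁ = s₂ := by
  have hwpos : 0 < w.length := List.length_pos_iff.mpr hw
  have key : ∀ t₁ t₂, t₁ ≤ X.length → t₂ ≤ X.length →
      (X.drop t₁).take w.length = w → (X.drop t₂).take w.length = w →
      occCount w (w.drop 1 ++ X.drop (t₁ + w.length)) = 0 → ¬ (t₁ < t₂) := by
    intro t₁ t₂ ht₁ ht₂ hm₁ hm₂ hz₁ hlt
    have ht₂p : t₂ + w.length ≤ X.length := by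
      have := take_eq_imp_le hm₂
      rw [List.length_drop] at this
      omega
    have heq : w.drop 1 ++ X.drop (t₁ + w.length) = X.drop (t₁+1) :=
      (occ_drop_succ w hw X t₁ hm₁).symm
    rw [heq] at hz₁
    have hposX : 0 < occCount w (X.drop (t₁+1)) := by
      rw [occ_pos_iff]
      refine ⟨t₂ - t₁ - 1, ?_, ?_⟩
      · rw [List.length_drop]; omega
      · rw [List.drop_drop, show t₁ + 1 + (t₂ - t₁ - 1) = t₂ from by omega]
        exact hm₂
    omega
  rcases lt_trichotomy s₁ s₂ with h | h | h
  · exact absurd h (key s₁ s₂ h₁ h₂ hR1.1 hR2.1 hR1.2)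
  · exact h
  · exact absurd h (key s₂ s₁ h₂ h₁ hR2.1 hR1.1 hR2.2)

end S10

namespace S10
set_option linter.unusedSectionVars false

variable {b : ℕ}

lemma count_first (w : List (Fin b)) (hw : w ≠ []) (c : List (Fin b)) (hc : occCount w c = 0)
    (j n : ℕ) :
    cnt b n (fun V => occCount w (c ++ V) = j + 1) =
    ∑ m ∈ Finset.range (n+1),
      cnt b m (fun u => occCount w (c ++ u) = 1 ∧ occCount w (c ++ u.dropLast) = 0)
      * cnt b (n-m) (fun v => occCount w (w.drop 1 ++ v) = j) := by
  apply cnt_split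
  · intro X hX
    constructor
    · intro hP
      obtain ⟨m, hm, hQ, heq⟩ := first_split w hw c X hc (by rw [hP]; omega)
      exact ⟨m, by omega, hQ, by omega⟩
    · rintro ⟨m, hm, hQ, hR⟩
      have hm0 : m ≠ 0 := by
        intro h0
        rw [h0, List.take_zero, List.append_nil] at hQ
        omega
      have htk : X.take m ≠ [] := by
        intro hcon
        have := congrArg List.length hcon
        simp only [List.length_take, List.length_nil] at this
        omega
      have hX' : c ++ X.take m ≠ [] := fun hcon => htk (List.append_eq_nil_iff.mp hcon).2
      have hdl : (c ++ X.take m).dropLast = c ++ (X.take m).dropLast :=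
        List.dropLast_append_of_ne_nil htk
      rcases occ_dropLast w hw _ hX' with hcase | ⟨_, U₀, hU⟩
      · rw [hdl, hQ.2] at hcase; omega
      · have hsplit : c ++ X = (c ++ X.take m) ++ X.drop m := by
          rw [List.append_assoc, List.take_append_drop]
        rw [hsplit, hU, occ_append_ends w hw, ← hU, hQ.1, hR]
        omega
  · intro X hX m₁ m₂ hm₁ hm₂ q1 r1 q2 r2
    exact first_split_unique w hw c X hc m₁ m₂ (by omega) (by omega) q1 q2

lemma count_escape (w : List (Fin b)) (hw : w ≠ []) (c : List (Fin b)) (hc : occCount w c = 0)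
    (n : ℕ) :
    (b:ℕ) ^ n = cnt b n (fun V => occCount w (c ++ V) = 0)
      + ∑ m ∈ Finset.range (n+1),
        cnt b m (fun u => occCount w (c ++ u) = 1 ∧ occCount w (c ++ u.dropLast) = 0)
        * b ^ (n-m) := by
  have h1 := cnt_add_compl (b := b) (n := n) (fun V => occCount w (c ++ V) = 0)
  have h2 : cnt b n (fun V => ¬ occCount w (c ++ V) = 0) =
      ∑ m ∈ Finset.range (n+1),
      cnt b m (fun u => occCount w (c ++ u) = 1 ∧ occCount w (c ++ u.dropLast) = 0)
        * cnt b (n-m) (fun _ => True) := by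
    apply cnt_split
    · intro X hX
      constructor
      · intro hP
        obtain ⟨m, hm, hQ, heq⟩ := first_split w hw c X hc (Nat.pos_of_ne_zero hP)
        exact ⟨m, by omega, hQ, trivial⟩
      · rintro ⟨m, hm, hQ, -⟩
        have hle : occCount w (c ++ X.take m) ≤ occCount w (c ++ X) := by
          conv_rhs => rw [← List.take_append_drop m X]
          rw [← List.append_assoc]
          exact occ_append_left_le _ _ _
        omega
    · intro X hX m₁ m₂ hm₁ hm₂ q1 r1 q2 r2
      exact first_split_unique w hw c X hc m₁ m₂ (by omega) (by omega) q1 q2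
  rw [h2] at h1
  rw [← h1]
  congr 1
  apply Finset.sum_congr rfl
  intro m hm
  rw [cnt_true]

lemma count_last (w : List (Fin b)) (hw : w ≠ []) (n : ℕ) :
    (b:ℕ) ^ n = cnt b n (fun V => occCount w V = 0)
      + ∑ m ∈ Finset.range (n+1), b ^ m *
        cnt b (n-m) (fun v => v.take w.length = w ∧
          occCount w (w.drop 1 ++ v.drop w.length) = 0) := by
  have hwpos : 0 < w.length := List.length_pos_iff.mpr hw
  have h1 := cnt_add_compl (b := b) (n := n) (fun V => occCount w V = 0)
  have h2 : cnt b n (fun V => ¬ occCount w V = 0) =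
      ∑ m ∈ Finset.range (n+1), cnt b m (fun _ => True) *
        cnt b (n-m) (fun v => v.take w.length = w ∧
          occCount w (w.drop 1 ++ v.drop w.length) = 0) := by
    apply cnt_split
    · intro X hX
      constructor
      · intro hP
        obtain ⟨s, hs, hmt, hz⟩ := last_split w hw X (Nat.pos_of_ne_zero hP)
        refine ⟨s, by omega, trivial, hmt, ?_⟩
        rw [List.drop_drop]
        exact hz
      · rintro ⟨m, hm, -, hmt, hz⟩
        have hmp : m + w.length ≤ X.length := by
          have := take_eq_imp_le hmt
          rw [List.length_drop] at this
          omega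
        intro hcon
        have : 0 < occCount w X := (occ_pos_iff w X).mpr ⟨m, by omega, hmt⟩
        omega
    · intro X hX m₁ m₂ hm₁ hm₂ q1 r1 q2 r2
      apply last_split_unique w hw X m₁ m₂ (by omega) (by omega)
      · exact ⟨r1.1, by have := r1.2; rw [List.drop_drop] at this; exact this⟩
      · exact ⟨r2.1, by have := r2.2; rw [List.drop_drop] at this; exact this⟩
  rw [h2] at h1
  rw [← h1]
  congr 1
  apply Finset.sum_congr rfl
  intro m hm
  rw [cnt_true]

end S10

namespace S10
set_option linter.unusedSectionVars false
open Filter Topology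
open scoped ENNReal NNReal

lemma ennreal_cauchy (f g : ℕ → ℝ≥0∞) :
    ∑' n, ∑ m ∈ Finset.range (n+1), f m * g (n-m) = (∑' n, f n) * (∑' n, g n) := by
  have h1 : ∀ n, ∑ m ∈ Finset.range (n+1), f m * g (n-m)
      = ∑ ij ∈ Finset.HasAntidiagonal.antidiagonal n, f ij.1 * g ij.2 := fun n =>
    (Finset.Nat.sum_antidiagonal_eq_sum_range_succ_mk (fun ij => f ij.1 * g ij.2) n).symm
  simp_rw [h1]
  have h2 : ∀ n, ∑ ij ∈ Finset.HasAntidiagonal.antidiagonal n, f ij.1 * g ij.2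
      = ∑' (y : {x // x ∈ Finset.HasAntidiagonal.antidiagonal n}), f (y : ℕ × ℕ).1 * g (y : ℕ × ℕ).2 := fun n =>
    (Finset.tsum_subtype _ _).symm
  simp_rw [h2]
  have h3 := ENNReal.tsum_sigma (f := fun (n : ℕ) (y : {x // x ∈ Finset.HasAntidiagonal.antidiagonal n}) =>
    f y.val.1 * g y.val.2)
  rw [← h3]
  rw [show (fun (p : Σ n : ℕ, {x // x ∈ Finset.HasAntidiagonal.antidiagonal n}) =>
      f p.2.val.1 * g p.2.val.2) = (fun (x : ℕ × ℕ) => f x.1 * g x.2) ∘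
      Finset.HasAntidiagonal.sigmaAntidiagonalEquivProd from rfl]
  rw [Function.comp_def]
  rw [Finset.HasAntidiagonal.sigmaAntidiagonalEquivProd.tsum_eq (fun (x : ℕ × ℕ) => f x.1 * g x.2)]
  calc ∑' (x : ℕ × ℕ), f x.1 * g x.2
      = ∑' (a : ℕ), ∑' (c : ℕ), f a * g c := ENNReal.tsum_prod (f := fun a c => f a * g c)
    _ = ∑' (a : ℕ), f a * ∑' (c : ℕ), g c := by simp_rw [ENNReal.tsum_mul_left]
    _ = (∑' n, f n) * ∑' n, g n := ENNReal.tsum_mul_right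

section Analysis

variable {b : ℕ}

lemma bne0 (hb : 1 < b) : (b : ℝ≥0∞) ≠ 0 := by
  simp only [ne_eq, Nat.cast_eq_zero]; omega

lemma br_one (hb : 1 < b) : (b : ℝ≥0∞) * (b : ℝ≥0∞)⁻¹ = 1 :=
  ENNReal.mul_inv_cancel (bne0 hb) (ENNReal.natCast_ne_top b)

lemma pow_mul_inv_pow (hb : 1 < b) {m n : ℕ} (h : m ≤ n) :
    ((b : ℝ≥0∞)) ^ (n - m) * ((b : ℝ≥0∞)⁻¹) ^ n = ((b : ℝ≥0∞)⁻¹) ^ m := by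
  have h1 : ((b : ℝ≥0∞)⁻¹) ^ n = ((b : ℝ≥0∞)⁻¹) ^ (n - m) * ((b : ℝ≥0∞)⁻¹) ^ m := by
    rw [← pow_add]
    congr 1
    omega
  rw [h1, ← mul_assoc, ← mul_pow, br_one hb, one_pow, one_mul]

-- step bound for strings with no occurrence
lemma Z_step (w : List (Fin b)) (hw : w ≠ []) (n : ℕ) :
    cnt b (w.length + n) (fun V => occCount w V = 0) ≤
      (b ^ w.length - 1) * cnt b n (fun V => occCount w V = 0) := by
  classical
  have hwpos : 0 < w.length := List.length_pos_iff.mpr hw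
  have hcard : ((Strs b w.length).erase w ×ˢ
      ((Strs b n).filter (fun V => occCount w V = 0))).card =
      (b ^ w.length - 1) * cnt b n (fun V => occCount w V = 0) := by
    rw [Finset.card_product, Finset.card_erase_of_mem (mem_Strs.mpr (rfl)), card_Strs, cnt]
  rw [← hcard, cnt]
  apply Finset.card_le_card_of_injOn
    (fun V => (V.take w.length, V.drop w.length))
  · intro V hV
    rw [Finset.mem_coe, Finset.mem_filter, mem_Strs] at hV
    obtain ⟨hlen, hocc⟩ := hV
    rw [Finset.mem_coe, Finset.mem_product, Finset.mem_erase, mem_Strs, Finset.mem_filter, mem_Strs]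
    dsimp only
    refine ⟨⟨?_, by simp [hlen]⟩, by simp [hlen], ?_⟩
    · intro hcon
      have : 0 < occCount w V := (occ_pos_iff w V).mpr ⟨0, by omega, by simpa using hcon⟩
      omega
    · have hle : occCount w (V.drop w.length) ≤ occCount w V := by
        conv_rhs => rw [← List.take_append_drop w.length V]
        exact occ_append_right_le _ _ _
      omega
  · intro u hu v hv huv
    have h1 := congrArg Prod.fst huv
    have h2 := congrArg Prod.snd huv
    simp only at h1 h2
    have h3 := List.take_append_drop w.length u
    rw [← h3, h1, h2, List.take_append_drop]

lemma Z_bound (w : List (Fin b)) (hw : w ≠ []) (q s : ℕ) :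
    cnt b (q * w.length + s) (fun V => occCount w V = 0) ≤
      (b ^ w.length - 1) ^ q * b ^ s := by
  induction q with
  | zero => simpa using cnt_le_pow _
  | succ q ih =>
    have h1 : (q+1) * w.length + s = w.length + (q * w.length + s) := by ring
    rw [h1]
    calc cnt b (w.length + (q * w.length + s)) (fun V => occCount w V = 0)
        ≤ (b ^ w.length - 1) * cnt b (q * w.length + s) (fun V => occCount w V = 0) :=
          Z_step w hw _
      _ ≤ (b ^ w.length - 1) * ((b ^ w.length - 1) ^ q * b ^ s) :=
          Nat.mul_le_mul_left _ ih
      _ = (b ^ w.length - 1) ^ (q+1) * b ^ s := by ring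

lemma Z_tendsto (hb : 1 < b) (w : List (Fin b)) (hw : w ≠ []) (c : List (Fin b)) :
    Tendsto (fun n => (cnt b n (fun V => occCount w (c ++ V) = 0) : ℝ≥0∞)
      * ((b : ℝ≥0∞)⁻¹) ^ n) atTop (𝓝 0) := by
  have hwpos : 0 < w.length := List.length_pos_iff.mpr hw
  set p := w.length with hp
  set r : ℝ≥0∞ := (b : ℝ≥0∞)⁻¹ with hrdef
  set q : ℝ≥0∞ := ((b ^ p - 1 : ℕ) : ℝ≥0∞) * r ^ p with hq
  have hble : ∀ n, (cnt b n (fun V => occCount w (c ++ V) = 0) : ℝ≥0∞) * r ^ n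
      ≤ q ^ (n / p) := by
    intro n
    have hmono : cnt b n (fun V => occCount w (c ++ V) = 0) ≤
        cnt b n (fun V => occCount w V = 0) := by
      apply cnt_mono
      intro X _ hX
      have := occ_append_right_le w c X
      omega
    have hZB : cnt b n (fun V => occCount w V = 0) ≤ (b ^ p - 1) ^ (n / p) * b ^ (n % p) := by
      have h := Z_bound w hw (n / p) (n % p)
      have e : n / p * w.length + n % p = n := by rw [← hp]; exact Nat.div_add_mod' n p
      rwa [e] at h
    have e1 : r ^ n = (r ^ p) ^ (n / p) * r ^ (n % p) := by
      rw [← pow_mul, ← pow_add]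
      congr 1
      exact (Nat.div_add_mod n p).symm
    calc (cnt b n (fun V => occCount w (c ++ V) = 0) : ℝ≥0∞) * r ^ n
        ≤ (((b ^ p - 1 : ℕ) : ℝ≥0∞) ^ (n / p) * (b:ℝ≥0∞) ^ (n % p)) * r ^ n := by
          apply mul_le_mul_left
          have h4 : (cnt b n (fun V => occCount w (c ++ V) = 0)) ≤
              (b ^ p - 1) ^ (n / p) * b ^ (n % p) := le_trans hmono hZB
          exact_mod_cast h4
      _ = (((b ^ p - 1:ℕ):ℝ≥0∞) ^ (n/p) * (r ^ p) ^ (n/p)) *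
            ((b:ℝ≥0∞) ^ (n % p) * r ^ (n % p)) := by rw [e1]; ring
      _ = q ^ (n/p) * ((b:ℝ≥0∞) * r) ^ (n % p) := by rw [hq, mul_pow, mul_pow]
      _ = q ^ (n/p) := by rw [hrdef, br_one hb, one_pow, mul_one]
  have hq1 : q < 1 := by
    have hbp : (0:ℕ) < b ^ p := pow_pos (by omega) p
    have hbp0 : ((b:ℝ≥0∞)) ^ p ≠ 0 := pow_ne_zero _ (bne0 hb)
    have hbpt : ((b:ℝ≥0∞)) ^ p ≠ ⊤ := ENNReal.pow_ne_top (ENNReal.natCast_ne_top b)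
    have hqd : q = ((b ^ p - 1 : ℕ) : ℝ≥0∞) / ((b:ℝ≥0∞)) ^ p := by
      rw [hq, hrdef, ← ENNReal.inv_pow, div_eq_mul_inv]
    rw [hqd, ENNReal.div_lt_iff (Or.inl hbp0) (Or.inl hbpt), one_mul]
    rw [show ((b:ℝ≥0∞))^p = ((b^p : ℕ) : ℝ≥0∞) by push_cast; ring]
    exact_mod_cast Nat.sub_lt hbp Nat.one_pos
  have hdiv : Tendsto (fun n => n / p) atTop atTop := by
    apply Filter.tendsto_atTop_atTop.mpr
    intro k
    exact ⟨k * p, fun n hn => (Nat.le_div_iff_mul_le hwpos).mpr hn⟩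
  have hqn : Tendsto (fun n => q ^ (n / p)) atTop (𝓝 0) :=
    (ENNReal.tendsto_pow_atTop_nhds_zero_of_lt_one hq1).comp hdiv
  exact tendsto_of_tendsto_of_tendsto_of_le_of_le tendsto_const_nhds hqn
    (fun n => zero_le) hble


lemma B_sum_one (hb : 1 < b) (w : List (Fin b)) (hw : w ≠ []) (c : List (Fin b))
    (hc : occCount w c = 0) :
    ∑' m, (cnt b m (fun u => occCount w (c ++ u) = 1 ∧ occCount w (c ++ u.dropLast) = 0) : ℝ≥0∞)
      * ((b : ℝ≥0∞)⁻¹) ^ m = 1 := by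
  set r : ℝ≥0∞ := (b : ℝ≥0∞)⁻¹ with hrdef
  set f : ℕ → ℝ≥0∞ := fun m =>
    (cnt b m (fun u => occCount w (c ++ u) = 1 ∧ occCount w (c ++ u.dropLast) = 0) : ℝ≥0∞)
    * r ^ m with hf
  have key : ∀ n : ℕ, (1:ℝ≥0∞) =
      (cnt b n (fun V => occCount w (c ++ V) = 0) : ℝ≥0∞) * r ^ n
      + ∑ m ∈ Finset.range (n+1), f m := by
    intro n
    have hcast : ((b:ℝ≥0∞)) ^ n = (cnt b n (fun V => occCount w (c ++ V) = 0) : ℝ≥0∞)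
        + ∑ m ∈ Finset.range (n+1),
          (cnt b m (fun u => occCount w (c ++ u) = 1 ∧ occCount w (c ++ u.dropLast) = 0) : ℝ≥0∞)
          * ((b:ℝ≥0∞)) ^ (n - m) := by
      exact_mod_cast congrArg (Nat.cast : ℕ → ℝ≥0∞) (count_escape w hw c hc n)
    calc (1:ℝ≥0∞) = ((b:ℝ≥0∞))^n * r^n := by rw [← mul_pow, br_one hb, one_pow]
      _ = ((cnt b n (fun V => occCount w (c ++ V) = 0) : ℝ≥0∞)
          + ∑ m ∈ Finset.range (n+1),
            (cnt b m (fun u => occCount w (c ++ u) = 1 ∧ occCount w (c ++ u.dropLast) = 0) : ℝ≥0∞)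
            * ((b:ℝ≥0∞)) ^ (n - m)) * r^n := by rw [← hcast]
      _ = (cnt b n (fun V => occCount w (c ++ V) = 0) : ℝ≥0∞) * r ^ n
          + ∑ m ∈ Finset.range (n+1),
            (cnt b m (fun u => occCount w (c ++ u) = 1 ∧ occCount w (c ++ u.dropLast) = 0) : ℝ≥0∞)
            * (((b:ℝ≥0∞)) ^ (n - m) * r ^ n) := by
          rw [add_mul, Finset.sum_mul]
          congr 1
          apply Finset.sum_congr rfl
          intro m hm
          ring
      _ = (cnt b n (fun V => occCount w (c ++ V) = 0) : ℝ≥0∞) * r ^ n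
          + ∑ m ∈ Finset.range (n+1), f m := by
          congr 1
          apply Finset.sum_congr rfl
          intro m hm
          rw [Finset.mem_range] at hm
          rw [pow_mul_inv_pow hb (by omega : m ≤ n)]
  have hlim : Tendsto (fun n => (cnt b n (fun V => occCount w (c ++ V) = 0) : ℝ≥0∞) * r ^ n
      + ∑ m ∈ Finset.range (n+1), f m) atTop (𝓝 (0 + ∑' m, f m)) := by
    apply Filter.Tendsto.add (Z_tendsto hb w hw c)
    have := (ENNReal.tendsto_nat_tsum f).comp (Filter.tendsto_add_atTop_nat 1)
    exact this
  have h1 : Tendsto (fun _ : ℕ => (1:ℝ≥0∞)) atTop (𝓝 1) := tendsto_const_nhds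
  rw [show (fun _ : ℕ => (1:ℝ≥0∞)) = (fun n => (cnt b n (fun V => occCount w (c ++ V) = 0) : ℝ≥0∞) * r ^ n
      + ∑ m ∈ Finset.range (n+1), f m) from funext key] at h1
  have := tendsto_nhds_unique h1 hlim
  rw [zero_add] at this
  exact this.symm

lemma kac (hb : 1 < b) (w : List (Fin b)) (hw : w ≠ []) :
    ∑' n, (cnt b n (fun v => occCount w (w.drop 1 ++ v) = 0) : ℝ≥0∞) * ((b:ℝ≥0∞)⁻¹) ^ n
      = ((b:ℝ≥0∞)) ^ w.length := by
  have hwpos : 0 < w.length := List.length_pos_iff.mpr hw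
  set r : ℝ≥0∞ := (b : ℝ≥0∞)⁻¹ with hrdef
  set T0 : ℕ → ℝ≥0∞ := fun i =>
    (cnt b i (fun v => occCount w (w.drop 1 ++ v) = 0) : ℝ≥0∞) * r ^ i with hT0
  have hterm : ∀ t : ℕ,
      ((cnt b t (fun v => v.take w.length = w ∧
        occCount w (w.drop 1 ++ v.drop w.length) = 0) : ℕ) : ℝ≥0∞)
      = if w.length ≤ t then
          ((cnt b (t - w.length) (fun v => occCount w (w.drop 1 ++ v) = 0) : ℕ) : ℝ≥0∞) else 0 := by
    intro t
    by_cases hpt : w.length ≤ t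
    · rw [if_pos hpt]
      exact_mod_cast congrArg (Nat.cast : ℕ → ℝ≥0∞)
        (cnt_prepend t w (fun v => occCount w (w.drop 1 ++ v) = 0) hpt)
    · rw [if_neg hpt]
      norm_cast
      apply cnt_eq_zero
      intro X hX hcon
      have := take_eq_imp_le hcon.1
      omega
  have key : ∀ n : ℕ, (1:ℝ≥0∞) = (cnt b n (fun V => occCount w V = 0) : ℝ≥0∞) * r ^ n
      + r ^ w.length * ∑ i ∈ Finset.range (n + 1 - w.length), T0 i := by
    intro n
    have hcast : ((b:ℝ≥0∞)) ^ n = (cnt b n (fun V => occCount w V = 0) : ℝ≥0∞)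
        + ∑ m ∈ Finset.range (n+1), ((b:ℝ≥0∞)) ^ m *
          ((cnt b (n-m) (fun v => v.take w.length = w ∧
            occCount w (w.drop 1 ++ v.drop w.length) = 0) : ℕ) : ℝ≥0∞) := by
      exact_mod_cast congrArg (Nat.cast : ℕ → ℝ≥0∞) (count_last w hw n)
    set G : ℕ → ℝ≥0∞ := fun t => ((cnt b t (fun v => v.take w.length = w ∧
            occCount w (w.drop 1 ++ v.drop w.length) = 0) : ℕ) : ℝ≥0∞) * r ^ t with hG
    have hsum : (∑ m ∈ Finset.range (n+1), ((b:ℝ≥0∞)) ^ m *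
          ((cnt b (n-m) (fun v => v.take w.length = w ∧
            occCount w (w.drop 1 ++ v.drop w.length) = 0) : ℕ) : ℝ≥0∞)) * r ^ n
        = r ^ w.length * ∑ i ∈ Finset.range (n + 1 - w.length), T0 i := by
      rw [Finset.sum_mul]
      have e1 : ∀ m ∈ Finset.range (n+1),
          ((b:ℝ≥0∞)) ^ m * ((cnt b (n-m) (fun v => v.take w.length = w ∧
            occCount w (w.drop 1 ++ v.drop w.length) = 0) : ℕ) : ℝ≥0∞) * r ^ n
          = G (n - m) := by
        intro m hm
        rw [Finset.mem_range] at hm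
        have hb2 : ((b:ℝ≥0∞)) ^ m = ((b:ℝ≥0∞)) ^ (n - (n - m)) := by congr 1; omega
        have h3 : ((b:ℝ≥0∞)) ^ (n - (n-m)) * r ^ n = r ^ (n - m) :=
          pow_mul_inv_pow hb (by omega : n - m ≤ n)
        rw [hb2, hG]
        rw [mul_comm (((b:ℝ≥0∞)) ^ (n - (n-m))) _, mul_assoc, h3]
      rw [Finset.sum_congr rfl e1]
      have hrefl := Finset.sum_range_reflect G (n+1)
      simp only [Nat.add_sub_cancel] at hrefl
      rw [hrefl]
      calc ∑ t ∈ Finset.range (n+1), G t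
          = ∑ t ∈ Finset.range (n+1), (if w.length ≤ t then
              ((cnt b (t - w.length) (fun v => occCount w (w.drop 1 ++ v) = 0) : ℕ) : ℝ≥0∞)
              * r ^ t else 0) := by
            apply Finset.sum_congr rfl
            intro t _
            rw [hG]
            simp only
            rw [hterm t]
            split
            · rfl
            · rw [zero_mul]
        _ = ∑ t ∈ Finset.Ico w.length (n+1),
              ((cnt b (t - w.length) (fun v => occCount w (w.drop 1 ++ v) = 0) : ℕ) : ℝ≥0∞)
              * r ^ t := by
            rw [← Finset.sum_filter]
            congr 1
            ext t
            simp only [Finset.mem_filter, Finset.mem_range, Finset.mem_Ico]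
            constructor
            · rintro ⟨h1, h2⟩; exact ⟨h2, h1⟩
            · rintro ⟨h1, h2⟩; exact ⟨h2, h1⟩
        _ = ∑ i ∈ Finset.range (n+1-w.length),
              ((cnt b (w.length + i - w.length) (fun v => occCount w (w.drop 1 ++ v) = 0) : ℕ) : ℝ≥0∞)
              * r ^ (w.length + i) :=
            Finset.sum_Ico_eq_sum_range _ _ _
        _ = r ^ w.length * ∑ i ∈ Finset.range (n+1-w.length), T0 i := by
            rw [Finset.mul_sum]
            apply Finset.sum_congr rfl
            intro i _
            rw [show w.length + i - w.length = i from by omega, pow_add, hT0]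
            ring
    calc (1:ℝ≥0∞) = ((b:ℝ≥0∞))^n * r^n := by rw [← mul_pow, br_one hb, one_pow]
      _ = ((cnt b n (fun V => occCount w V = 0) : ℝ≥0∞)
          + ∑ m ∈ Finset.range (n+1), ((b:ℝ≥0∞)) ^ m *
          ((cnt b (n-m) (fun v => v.take w.length = w ∧
            occCount w (w.drop 1 ++ v.drop w.length) = 0) : ℕ) : ℝ≥0∞)) * r^n := by rw [← hcast]
      _ = (cnt b n (fun V => occCount w V = 0) : ℝ≥0∞) * r ^ n
          + r ^ w.length * ∑ i ∈ Finset.range (n + 1 - w.length), T0 i := by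
          rw [add_mul, hsum]
  have hrt : r ^ w.length ≠ ⊤ :=
    ENNReal.pow_ne_top (ENNReal.inv_ne_top.mpr (bne0 hb))
  have hshift : Tendsto (fun n : ℕ => n + 1 - w.length) atTop atTop := by
    apply Filter.tendsto_atTop_atTop.mpr
    intro k
    exact ⟨k + w.length, fun n hn => by omega⟩
  have hlim : Tendsto (fun n => (cnt b n (fun V => occCount w V = 0) : ℝ≥0∞) * r ^ n
      + r ^ w.length * ∑ i ∈ Finset.range (n + 1 - w.length), T0 i) atTop
      (𝓝 (0 + r ^ w.length * ∑' i, T0 i)) := by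
    apply Filter.Tendsto.add
    · have := Z_tendsto hb w hw []
      simp only [List.nil_append] at this
      exact this
    · exact ENNReal.Tendsto.const_mul ((ENNReal.tendsto_nat_tsum T0).comp hshift)
        (Or.inr hrt)
  have h1 : Tendsto (fun _ : ℕ => (1:ℝ≥0∞)) atTop (𝓝 1) := tendsto_const_nhds
  rw [show (fun _ : ℕ => (1:ℝ≥0∞)) = (fun n =>
      (cnt b n (fun V => occCount w V = 0) : ℝ≥0∞) * r ^ n
      + r ^ w.length * ∑ i ∈ Finset.range (n + 1 - w.length), T0 i) from funext key] at h1
  have heq := tendsto_nhds_unique h1 hlim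
  rw [zero_add] at heq
  have hfin : ((b:ℝ≥0∞)) ^ w.length * 1 =
      ((b:ℝ≥0∞)) ^ w.length * (r ^ w.length * ∑' i, T0 i) := by rw [← heq]
  rw [mul_one, ← mul_assoc, ← mul_pow, br_one hb, one_pow, one_mul] at hfin
  exact hfin.symm

lemma step_sigma (hb : 1 < b) (w : List (Fin b)) (hw : w ≠ []) (c : List (Fin b))
    (hc : occCount w c = 0) (j : ℕ) :
    ∑' n, (cnt b n (fun V => occCount w (c ++ V) = j + 1) : ℝ≥0∞) * ((b:ℝ≥0∞)⁻¹) ^ n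
      = ∑' n, (cnt b n (fun v => occCount w (w.drop 1 ++ v) = j) : ℝ≥0∞) * ((b:ℝ≥0∞)⁻¹) ^ n := by
  set r : ℝ≥0∞ := (b : ℝ≥0∞)⁻¹ with hrdef
  set Bf : ℕ → ℝ≥0∞ := fun m =>
    (cnt b m (fun u => occCount w (c ++ u) = 1 ∧ occCount w (c ++ u.dropLast) = 0) : ℝ≥0∞)
    * r ^ m with hBf
  set Tf : ℕ → ℝ≥0∞ := fun i =>
    (cnt b i (fun v => occCount w (w.drop 1 ++ v) = j) : ℝ≥0∞) * r ^ i with hTf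
  have hpt : ∀ n, (cnt b n (fun V => occCount w (c ++ V) = j+1) : ℝ≥0∞) * r^n
      = ∑ m ∈ Finset.range (n+1), Bf m * Tf (n-m) := by
    intro n
    rw [count_first w hw c hc j n]
    push_cast
    rw [Finset.sum_mul]
    apply Finset.sum_congr rfl
    intro m hm
    rw [Finset.mem_range] at hm
    have e : r ^ n = r ^ m * r ^ (n - m) := by rw [← pow_add]; congr 1; omega
    rw [e, hBf, hTf]
    ring
  calc ∑' n, (cnt b n (fun V => occCount w (c ++ V) = j + 1) : ℝ≥0∞) * r ^ n
      = ∑' n, ∑ m ∈ Finset.range (n+1), Bf m * Tf (n-m) := tsum_congr hpt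
    _ = (∑' m, Bf m) * (∑' i, Tf i) := ennreal_cauchy _ _
    _ = ∑' i, Tf i := by rw [hBf]; rw [B_sum_one hb w hw c hc, one_mul]

lemma main_ennreal (hb : 1 < b) (w : List (Fin b)) (hw : w ≠ []) (k : ℕ) (hk : 1 ≤ k) :
    ∑' n, (cnt b n (fun V => occCount w V = k) : ℝ≥0∞) * ((b:ℝ≥0∞)⁻¹) ^ n
      = ((b:ℝ≥0∞)) ^ w.length := by
  have hwpos : 0 < w.length := List.length_pos_iff.mpr hw
  have hw' : occCount w (w.drop 1) = 0 := occ_short (by rw [List.length_drop]; omega)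
  have hT : ∀ j, ∑' n, (cnt b n (fun v => occCount w (w.drop 1 ++ v) = j) : ℝ≥0∞)
      * ((b:ℝ≥0∞)⁻¹) ^ n = ((b:ℝ≥0∞)) ^ w.length := by
    intro j
    induction j with
    | zero => exact kac hb w hw
    | succ j ih => rw [step_sigma hb w hw (w.drop 1) hw' j]; exact ih
  obtain ⟨k', rfl⟩ : ∃ k', k = k' + 1 := ⟨k-1, by omega⟩
  have h0 : ∀ n, cnt b n (fun V => occCount w V = k'+1)
      = cnt b n (fun V => occCount w ([] ++ V) = k'+1) := fun n =>
    cnt_congr (fun X _ => by rw [List.nil_append])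
  calc ∑' n, (cnt b n (fun V => occCount w V = k'+1) : ℝ≥0∞) * ((b:ℝ≥0∞)⁻¹) ^ n
      = ∑' n, (cnt b n (fun V => occCount w ([] ++ V) = k'+1) : ℝ≥0∞) * ((b:ℝ≥0∞)⁻¹) ^ n := by
        apply tsum_congr
        intro n
        rw [h0 n]
    _ = ∑' n, (cnt b n (fun v => occCount w (w.drop 1 ++ v) = k') : ℝ≥0∞) * ((b:ℝ≥0∞)⁻¹) ^ n :=
        step_sigma hb w hw [] (occ_nil w) k'
    _ = ((b:ℝ≥0∞)) ^ w.length := hT k'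

lemma Nw_eq_cnt (b : ℕ) (w : List (Fin b)) (k l : ℕ) :
    Nw b w k l = cnt b l (fun X => occCount w X = k) := by
  classical
  rw [Nw, Fintype.card_subtype, cnt]
  apply Finset.card_bij (fun f _ => List.ofFn f)
  · intro f hf
    rw [Finset.mem_filter] at hf ⊢
    exact ⟨mem_Strs.mpr (by simp), hf.2⟩
  · intro f _ g _ h
    exact List.ofFn_injective h
  · intro X hX
    rw [Finset.mem_filter, mem_Strs] at hX
    obtain ⟨hlen, hocc⟩ := hX
    subst hlen
    refine ⟨X.get, ?_, List.ofFn_get X⟩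
    rw [Finset.mem_filter]
    exact ⟨Finset.mem_univ _, by rw [List.ofFn_get]; exact hocc⟩

end Analysis
end S10


open scoped NNReal ENNReal

/-- For `k ≥ 1` the total mass of the `k`-admissible strings equals `b^p`. -/
theorem stmt10 (b : ℕ) (hb : 1 < b) (w : List (Fin b)) (hw : 1 ≤ w.length)
    (k : ℕ) (hk : 1 ≤ k) :
    ∑' l : ℕ, (Nw b w k l : ℝ) * ((b : ℝ)⁻¹) ^ l = (b : ℝ) ^ w.length := by
  classical
  have hwne : w ≠ [] := by
    intro h
    rw [h] at hw
    simp at hw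
  have hmain := S10.main_ennreal hb w hwne k hk
  have hb0 : (b:ℝ≥0) ≠ 0 := Nat.cast_ne_zero.mpr (by omega)
  set f : ℕ → ℝ≥0 := fun l => (Nw b w k l : ℝ≥0) * ((b:ℝ≥0)⁻¹) ^ l with hf
  have hcoe : ∀ l, ((f l : ℝ≥0) : ℝ≥0∞)
      = (S10.cnt b l (fun X => occCount w X = k) : ℝ≥0∞) * ((b:ℝ≥0∞)⁻¹) ^ l := by
    intro l
    rw [hf]
    simp only
    rw [ENNReal.coe_mul, ENNReal.coe_pow, ENNReal.coe_inv hb0, ENNReal.coe_natCast,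
      ENNReal.coe_natCast, S10.Nw_eq_cnt]
  have htsum : ∑' l, ((f l : ℝ≥0) : ℝ≥0∞) = (((b:ℝ≥0) ^ w.length : ℝ≥0) : ℝ≥0∞) := by
    rw [tsum_congr hcoe, hmain, ENNReal.coe_pow, ENNReal.coe_natCast]
  have hsummable : Summable f := ENNReal.tsum_coe_ne_top_iff_summable.mp
    (by rw [htsum]; exact ENNReal.coe_ne_top)
  have hnn : ∑' l, f l = (b:ℝ≥0) ^ w.length := by
    apply ENNReal.coe_injective
    rw [ENNReal.coe_tsum hsummable, htsum]
  have hreal : ∑' l, ((f l : ℝ)) = (((b:ℝ≥0) ^ w.length : ℝ≥0) : ℝ) := by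
    rw [← NNReal.coe_tsum, hnn]
  calc ∑' l, (Nw b w k l : ℝ) * ((b:ℝ)⁻¹)^l
      = ∑' l, ((f l : ℝ)) := by
        apply tsum_congr
        intro l
        rw [hf]
        push_cast
        ring
    _ = (((b:ℝ≥0) ^ w.length : ℝ≥0) : ℝ) := hreal
    _ = (b:ℝ) ^ w.length := by push_cast; ring
end

section
/- The generating series of w-avoiding strings satisfies the Guibas–Odlyzko formula Z_w(0)(t) = A_w(t) / ((1 - bt) A_w(t) + t^p), where A_w is the autocorrelation polynomial of w. -/
open scoped BigOperators
open PowerSeries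

/-- The autocorrelation power series (polynomial) `A_w = Σ_{0≤i<p} c_i t^i`, where
`c_i = 1` iff the length-`(p-i)` prefix of `w` equals its length-`(p-i)` suffix. -/
noncomputable def Aw (b : ℕ) (w : List (Fin b)) : PowerSeries ℚ :=
  ∑ i ∈ Finset.range w.length,
    if w.take (w.length - i) = w.drop i then (X : PowerSeries ℚ) ^ i else 0

open List Finset

attribute [local instance] Classical.propDecidable

theorem occCount_eq {α : Type*} [DecidableEq α] (w X : List α) :
    occCount w X = ((Finset.range X.length).filter fun i => w <+: X.drop i).card := by
  have h0 : occCount w X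
      = ((Finset.range X.length).filter fun i => (X.drop i).take w.length = w).card := rfl
  rw [h0]
  exact congrArg Finset.card <| Finset.filter_congr fun i _ => by
    rw [List.prefix_iff_eq_take]; exact eq_comm

section GO
variable {b : ℕ} (w : List (Fin b))

/-- occurring nowhere -/
def avoids (X : List (Fin b)) : Prop := ∀ i, ¬ w <+: X.drop i

/-- exactly one occurrence, at the very end -/
def uniqEnd (X : List (Fin b)) : Prop :=
  w <:+ X ∧ ∀ i, w <+: X.drop i → i = X.length - w.length

variable {w}

theorem occ_bound (hw : 1 ≤ w.length) {X : List (Fin b)} {i : ℕ} (h : w <+: X.drop i) :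
    i + w.length ≤ X.length := by
  have := h.length_le
  rw [List.length_drop] at this
  omega

/-- lifting/restricting occurrences along prefixes -/
theorem occ_prefix_iff {X Y : List (Fin b)} (hYX : Y <+: X) {i : ℕ}
    (hi : i + w.length ≤ Y.length) : (w <+: X.drop i ↔ w <+: Y.drop i) := by
  obtain ⟨t, rfl⟩ := hYX
  have hd : (Y ++ t).drop i = Y.drop i ++ t.drop (i - Y.length) :=
    List.drop_append
  constructor
  · intro h
    refine List.prefix_of_prefix_length_le (hd ▸ h) (List.prefix_append _ _) ?_
    rw [List.length_drop]; omega
  · intro h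
    exact h.trans (hd ▸ List.prefix_append _ _)

theorem avoids_iff (hw : 1 ≤ w.length) (X : List (Fin b)) :
    occCount w X = 0 ↔ avoids w X := by
  rw [occCount_eq, Finset.card_eq_zero, Finset.filter_eq_empty_iff]
  constructor
  · intro h i hocc
    exact h (Finset.mem_range.2 (by have := occ_bound hw hocc; omega)) hocc
  · intro h i _ ; exact h i

theorem suffix_occ (hw : 1 ≤ w.length) {X : List (Fin b)} (h : w <:+ X) :
    w <+: X.drop (X.length - w.length) := by
  rw [List.suffix_iff_eq_drop] at h
  exact h ▸ List.prefix_refl _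

theorem uniqEnd_iff (hw : 1 ≤ w.length) (X : List (Fin b)) :
    (occCount w X = 1 ∧ w <:+ X) ↔ uniqEnd w X := by
  rw [occCount_eq]
  constructor
  · rintro ⟨h1, h2⟩
    refine ⟨h2, fun i hi => ?_⟩
    obtain ⟨a, ha⟩ := Finset.card_eq_one.1 h1
    have hwl := h2.length_le
    have hmem : ∀ j, w <+: X.drop j → j = a := by
      intro j hj
      have : j ∈ ({a} : Finset ℕ) := by
        rw [← ha]; exact Finset.mem_filter.2 ⟨Finset.mem_range.2 (by have := occ_bound hw hj; omega), hj⟩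
      simpa using this
    rw [hmem i hi, hmem _ (suffix_occ hw h2)]
  · rintro ⟨h2, h3⟩
    refine ⟨?_, h2⟩
    rw [Finset.card_eq_one]
    refine ⟨X.length - w.length, ?_⟩
    have hwl := h2.length_le
    ext j
    simp only [Finset.mem_filter, Finset.mem_range, Finset.mem_singleton]
    constructor
    · rintro ⟨_, hj⟩; exact h3 j hj
    · rintro rfl
      exact ⟨by omega, suffix_occ hw h2⟩

/-- the finset of all strings of length `l`, as lists -/
def strFin (b l : ℕ) : Finset (List (Fin b)) :=
  (Finset.univ : Finset (Fin l → Fin b)).image List.ofFn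

theorem mem_strFin {l : ℕ} {X : List (Fin b)} : X ∈ strFin b l ↔ X.length = l := by
  simp only [strFin, Finset.mem_image, Finset.mem_univ, true_and]
  constructor
  · rintro ⟨f, rfl⟩; simp
  · rintro rfl
    exact ⟨X.get, List.ofFn_get X⟩

theorem card_filter_strFin (Q : List (Fin b) → Prop) (l : ℕ) :
    ((strFin b l).filter Q).card = Fintype.card {f : Fin l → Fin b // Q (List.ofFn f)} := by
  rw [Fintype.card_subtype, strFin, Finset.filter_image,
    Finset.card_image_of_injective _ List.ofFn_injective]

theorem Nxy_avoids (hw : 1 ≤ w.length) (l : ℕ) :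
    Nxy b w [] [] 0 l = ((strFin b l).filter (avoids w)).card := by
  rw [card_filter_strFin, Nxy]
  exact Fintype.card_congr <| Equiv.subtypeEquivRight fun f => by
    simp [avoids_iff hw]

theorem Nxy_uniqEnd (hw : 1 ≤ w.length) (l : ℕ) :
    Nxy b w [] w 1 l = ((strFin b l).filter (uniqEnd w)).card := by
  rw [card_filter_strFin, Nxy]
  exact Fintype.card_congr <| Equiv.subtypeEquivRight fun f => by
    rw [← uniqEnd_iff hw]; simp

theorem partition1 (hw : 1 ≤ w.length) {l : ℕ} {X : List (Fin b)} (hX : X.length = l + 1) :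
    avoids w (X.take l) ↔ (avoids w X ∨ uniqEnd w X) := by
  have htl : (X.take l).length = l := by rw [List.length_take]; omega
  constructor
  · intro h
    by_cases hA : avoids w X
    · exact Or.inl hA
    · right
      simp only [avoids, not_forall, not_not] at hA
      have key : ∀ j, w <+: X.drop j → j = X.length - w.length := by
        intro j hj
        have hb1 := occ_bound hw hj
        by_contra hne
        have hj' : j + w.length ≤ l := by omega
        exact h j ((occ_prefix_iff (List.take_prefix l X) (by rw [htl]; omega)).1 hj)
      obtain ⟨i, hi⟩ := hA
      have hieq := key i hi
      subst hieq
      have hlen : (X.drop (X.length - w.length)).length = w.length := by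
        rw [List.length_drop]; have := occ_bound hw hi; omega
      have heq : w = X.drop (X.length - w.length) := hi.eq_of_length (by omega)
      exact ⟨List.suffix_iff_eq_drop.2 heq, key⟩
  · intro h j hj
    have hb1 := occ_bound hw hj
    rw [htl] at hb1
    have hj' : w <+: X.drop j :=
      (occ_prefix_iff (List.take_prefix l X) (by rw [htl]; omega)).2 hj
    rcases h with hA | ⟨hs, hu⟩
    · exact hA j hj'
    · have := hu j hj'; omega

theorem partition1_not (hw : 1 ≤ w.length) {X : List (Fin b)}
    (h1 : avoids w X) (h2 : uniqEnd w X) : False :=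
  h1 _ (suffix_occ hw h2.1)


theorem key1 (hb : 0 < b) (hw : 1 ≤ w.length) (l : ℕ) :
    b * ((strFin b l).filter (avoids w)).card
      = ((strFin b (l+1)).filter (avoids w)).card
        + ((strFin b (l+1)).filter (uniqEnd w)).card := by
  classical
  have d0 : Fin b := ⟨0, hb⟩
  -- step 1 : the lhs counts strings of length l+1 whose first l letters avoid w
  have step1 : (((strFin b l).filter (avoids w)) ×ˢ (Finset.univ : Finset (Fin b))).card
      = ((strFin b (l+1)).filter (fun X => avoids w (X.take l))).card := by
    refine Finset.card_nbij' (fun ua => ua.1 ++ [ua.2])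
      (fun X => (X.take l, (X.drop l).headD d0)) ?_ ?_ ?_ ?_
    · rintro ⟨u, a⟩ h
      simp only [Finset.mem_coe, Finset.mem_product, Finset.mem_filter, mem_strFin] at h ⊢
      obtain ⟨⟨hlen, hav⟩, -⟩ := h
      rw [List.take_left' hlen]
      constructor
      · simp [hlen]
      · exact hav
    · intro X h
      simp only [Finset.mem_coe, Finset.mem_product, Finset.mem_filter, mem_strFin] at h ⊢
      refine ⟨⟨?_, h.2⟩, Finset.mem_univ _⟩
      rw [List.length_take]; omega
    · rintro ⟨u, a⟩ h
      simp only [Finset.mem_coe, Finset.mem_product, Finset.mem_filter, mem_strFin] at h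
      obtain ⟨⟨hlen, -⟩, -⟩ := h
      dsimp only
      rw [List.take_left' hlen, List.drop_left' hlen]
      simp
    · intro X h
      simp only [Finset.mem_coe, Finset.mem_filter, mem_strFin] at h
      have hlen : (X.drop l).length = 1 := by rw [List.length_drop]; omega
      obtain ⟨a, ha⟩ := List.length_eq_one_iff.1 hlen
      dsimp only
      conv_rhs => rw [← List.take_append_drop l X]
      rw [ha]
      simp
  -- step 2 : partition by whether w occurs (then only at the end)
  have step2 : ((strFin b (l+1)).filter (fun X => avoids w (X.take l)))
      = ((strFin b (l+1)).filter (avoids w)) ∪ ((strFin b (l+1)).filter (uniqEnd w)) := by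
    rw [← Finset.filter_or]
    refine Finset.filter_congr fun X hX => ?_
    exact partition1 hw (mem_strFin.1 hX)
  have hdisj : Disjoint ((strFin b (l+1)).filter (avoids w))
      ((strFin b (l+1)).filter (uniqEnd w)) :=
    Finset.disjoint_filter.2 fun X _ h1 h2 => partition1_not hw h1 h2
  rw [← Finset.card_union_of_disjoint hdisj, ← step2, ← step1,
    Finset.card_product, Finset.card_univ, Fintype.card_fin, mul_comm]

variable (w) in
/-- strings of length `n` ending in `w` whose first `n - p` letters avoid `w` -/
noncomputable def Uset (n : ℕ) : Finset (List (Fin b)) :=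
  (strFin b n).filter (fun X => w <:+ X ∧ avoids w (X.take (n - w.length)))

variable (w) in
/-- strings of length `n` whose prefix of length `n - i` has a unique occurrence of `w`,
at its end, and whose last `i` letters are the last `i` letters of `w` -/
noncomputable def Vset (n i : ℕ) : Finset (List (Fin b)) :=
  (strFin b n).filter (fun X =>
    uniqEnd w (X.take (n - i)) ∧ X.drop (n - i) = w.drop (w.length - i))

theorem stepA (hw : 1 ≤ w.length) {n : ℕ} (hn : w.length ≤ n) :
    ((strFin b (n - w.length)).filter (avoids w)).card = (Uset w n).card := by
  classical
  refine Finset.card_nbij' (fun u => u ++ w) (fun X => X.take (n - w.length)) ?_ ?_ ?_ ?_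
  · intro u h
    simp only [Finset.mem_coe, Finset.mem_filter, mem_strFin, Uset] at h ⊢
    obtain ⟨hlen, hav⟩ := h
    refine ⟨by rw [List.length_append, hlen]; omega, List.suffix_append _ _, ?_⟩
    rw [List.take_left' hlen]; exact hav
  · intro X h
    simp only [Finset.mem_coe, Finset.mem_filter, mem_strFin, Uset] at h ⊢
    refine ⟨by rw [List.length_take]; omega, h.2.2⟩
  · intro u h
    simp only [Finset.mem_coe, Finset.mem_filter, mem_strFin] at h
    dsimp only
    rw [List.take_left' h.1]
  · intro X h
    simp only [Finset.mem_coe, Finset.mem_filter, mem_strFin, Uset] at h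
    obtain ⟨hlen, hsuf, -⟩ := h
    have hthis : w = X.drop (n - w.length) := by
      rw [List.suffix_iff_eq_drop] at hsuf; rwa [hlen] at hsuf
    dsimp only
    conv_rhs => rw [← List.take_append_drop (n - w.length) X]
    exact congrArg _ hthis

theorem stepC (hw : 1 ≤ w.length) {n i : ℕ} (hi : i < w.length) (hn : w.length ≤ n) :
    (Vset w n i).card = ((strFin b (n - i)).filter (uniqEnd w)).card := by
  classical
  refine Finset.card_nbij' (fun X => X.take (n - i)) (fun v => v ++ w.drop (w.length - i)) ?_ ?_ ?_ ?_
  · intro X h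
    simp only [Finset.mem_coe, Finset.mem_filter, mem_strFin, Vset] at h ⊢
    refine ⟨by rw [List.length_take]; omega, h.2.1⟩
  · intro v h
    simp only [Finset.mem_coe, Finset.mem_filter, mem_strFin, Vset] at h ⊢
    obtain ⟨hlen, hE⟩ := h
    have h1 : (v ++ w.drop (w.length - i)).length = n := by
      rw [List.length_append, hlen, List.length_drop]; omega
    refine ⟨h1, ?_, List.drop_left' hlen⟩
    rw [List.take_left' hlen]; exact hE
  · intro X h
    simp only [Finset.mem_coe, Finset.mem_filter, mem_strFin, Vset] at h
    obtain ⟨hlen, -, hdrop⟩ := h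
    dsimp only
    conv_rhs => rw [← List.take_append_drop (n - i) X]
    exact congrArg _ hdrop.symm
  · intro v h
    simp only [Finset.mem_coe, Finset.mem_filter, mem_strFin] at h
    dsimp only
    rw [List.take_left' h.1]

/-- backward inclusion : a correlated extension ends in `w` and its prefix avoids `w` -/
theorem V_subset_U (hw : 1 ≤ w.length) {n i : ℕ} (hi : i < w.length) (hn : w.length ≤ n)
    (hc : w.take (w.length - i) = w.drop i) {X : List (Fin b)} (hX : X ∈ Vset w n i) :
    X ∈ Uset w n := by
  simp only [Vset, Uset, Finset.mem_filter, mem_strFin] at hX ⊢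
  obtain ⟨hlen, hE, hdrop⟩ := hX
  set p := w.length with hp
  have hvlen : (X.take (n - i)).length = n - i := by rw [List.length_take]; omega
  have hpm : p ≤ n - i := by
    have := hE.1.length_le; omega
  -- w = (X.take (n-i)).drop ((n-i) - p)
  have hsufv : w = (X.take (n - i)).drop ((n - i) - p) := by
    have := List.suffix_iff_eq_drop.1 hE.1
    rwa [hvlen] at this
  -- the key computation : X.drop (n - p) = w
  have hdropnp : X.drop (n - p) = w := by
    have hX' : X = X.take (n - i) ++ w.drop (p - i) := by
      conv_lhs => rw [← List.take_append_drop (n - i) X]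
      exact congrArg _ hdrop
    have hv' : X.take (n - i) = (X.take (n - i)).take ((n - i) - p) ++ w := by
      conv_lhs => rw [← List.take_append_drop ((n - i) - p) (X.take (n - i))]
      exact congrArg _ hsufv.symm
    have htlen : ((X.take (n - i)).take ((n - i) - p)).length = (n - i) - p := by
      rw [List.length_take]; omega
    calc X.drop (n - p)
        = ((X.take (n - i)).take ((n - i) - p) ++ w ++ w.drop (p - i)).drop (n - p) := by
          rw [← hv', ← hX']
      _ = (((X.take (n - i)).take ((n - i) - p) ++ w).drop (n - p))
            ++ (w.drop (p - i)).drop ((n - p) - ((n - i) - p + p)) := by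
          rw [List.drop_append, List.length_append, htlen]
      _ = w.drop i ++ w.drop (p - i) := by
          have h1 : ((X.take (n - i)).take ((n - i) - p) ++ w).drop (n - p)
              = w.drop ((n - p) - ((n - i) - p)) := by
            rw [List.drop_append, htlen,
              List.drop_eq_nil_of_le (by omega : ((X.take (n-i)).take ((n-i) - p)).length ≤ n - p)]
            simp
          rw [h1]
          have : (n - p) - ((n - i) - p) = i := by omega
          have h2 : (n - p) - ((n - i) - p + p) = 0 := by omega
          rw [this, h2, List.drop_zero]
      _ = w := by rw [← hc, List.take_append_drop]
  refine ⟨hlen, ?_, ?_⟩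
  · rw [List.suffix_iff_eq_drop, hlen, hdropnp]
  · -- avoidance of the length n - p prefix
    intro j hj
    have hXtake : X.take (n - p) = (X.take (n - i)).take (n - p) := by
      rw [List.take_take, min_eq_left (by omega)]
    have hjb := occ_bound hw hj
    rw [List.length_take] at hjb
    have hjb' : j + p ≤ n - p := by omega
    rw [hXtake] at hj
    have hocc : w <+: (X.take (n - i)).drop j := by
      refine (occ_prefix_iff (List.take_prefix _ _) ?_).2 hj
      rw [List.length_take]; omega
    have := hE.2 j hocc
    rw [hvlen] at this
    omega

/-- forward inclusion : the first occurrence of `w` in `u ++ w` yields a correlation -/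
theorem U_subset_V (hw : 1 ≤ w.length) {n : ℕ} (hn : w.length ≤ n) {X : List (Fin b)}
    (hX : X ∈ Uset w n) :
    ∃ i, i < w.length ∧ w.take (w.length - i) = w.drop i ∧ X ∈ Vset w n i := by
  classical
  simp only [Uset, Finset.mem_filter, mem_strFin] at hX
  obtain ⟨hlen, hsuf, hav⟩ := hX
  set p := w.length with hp
  have hex : ∃ j, w <+: X.drop j := by
    refine ⟨n - p, ?_⟩
    have := suffix_occ hw hsuf; rwa [hlen] at this
  set j₀ := Nat.find hex with hj₀def
  have hj₀ : w <+: X.drop j₀ := Nat.find_spec hex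
  have hj₀le : j₀ ≤ n - p := Nat.find_min' hex (by
    have := suffix_occ hw hsuf; rwa [hlen] at this)
  have hbound : j₀ + p ≤ n := by have := occ_bound hw hj₀; omega
  have hgt : n - p < j₀ + p := by
    by_contra hcon
    push_neg at hcon
    refine hav j₀ ((occ_prefix_iff (List.take_prefix _ _) ?_).1 hj₀)
    rw [List.length_take]; omega
  refine ⟨n - p - j₀, by omega, ?_⟩
  set i := n - p - j₀ with hidef
  obtain ⟨r, hr⟩ := hj₀
  -- r is the last i letters of w
  have hnp : X.drop (n - p) = w := by
    have := List.suffix_iff_eq_drop.1 hsuf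
    rw [hlen] at this; exact this.symm
  have hweq : w = w.drop i ++ r := by
    have h1 : X.drop (n - p) = (X.drop j₀).drop i := by
      rw [List.drop_drop]; congr 1; omega
    rw [h1, ← hr, List.drop_append,
      (by omega : i - w.length = 0), List.drop_zero] at hnp
    exact hnp.symm
  have hrlen : r.length = i := by
    have := congrArg List.length hr
    rw [List.length_append, List.length_drop] at this
    omega
  have hdroplen : (w.drop i).length = p - i := by rw [List.length_drop]
  have hc : w.take (p - i) = w.drop i := by
    conv_lhs => rw [hweq]
    rw [List.take_left' hdroplen]
  have hrw : r = w.drop (p - i) := by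
    conv_rhs => rw [hweq]
    rw [List.drop_left' hdroplen]
  refine ⟨hc, ?_⟩
  simp only [Vset, Finset.mem_filter, mem_strFin]
  have hni : n - i = j₀ + p := by omega
  have hvlen : (X.take (n - i)).length = n - i := by rw [List.length_take]; omega
  refine ⟨hlen, ⟨?_, ?_⟩, ?_⟩
  · -- w is a suffix of X.take (n - i)
    rw [List.suffix_iff_eq_drop, hvlen, hni, (by omega : j₀ + p - p = j₀),
      List.drop_take, (by omega : j₀ + p - j₀ = p), ← hr]
    rw [List.take_left' rfl]
  · -- uniqueness
    intro j hj
    have hjb := occ_bound hw hj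
    rw [hvlen] at hjb
    have hj' : w <+: X.drop j :=
      (occ_prefix_iff (List.take_prefix _ _) (by rw [hvlen]; omega)).2 hj
    have hjge : j₀ ≤ j := Nat.find_min' hex hj'
    have : j = j₀ := by omega
    omega
  · -- the tail is determined
    rw [hni, ← List.drop_drop, ← hr, List.drop_left' rfl, hrw]

theorem V_disj_aux (hw : 1 ≤ w.length) {n i i' : ℕ} (hii' : i < i') (hi' : i' < w.length)
    (hn : w.length ≤ n) {X : List (Fin b)} (h1 : X ∈ Vset w n i) (h2 : X ∈ Vset w n i') :
    False := by
  simp only [Vset, Finset.mem_filter, mem_strFin] at h1 h2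
  set p := w.length with hp
  obtain ⟨hlen, hE, -⟩ := h1
  obtain ⟨-, hE', -⟩ := h2
  have hl1 : (X.take (n - i)).length = n - i := by rw [List.length_take]; omega
  have hl2 : (X.take (n - i')).length = n - i' := by rw [List.length_take]; omega
  have hpm' : p ≤ n - i' := by have := hE'.1.length_le; omega
  have hocc' : w <+: (X.take (n - i')).drop ((n - i') - p) := by
    have := suffix_occ hw hE'.1; rwa [hl2] at this
  have htt : X.take (n - i') = (X.take (n - i)).take (n - i') := by
    rw [List.take_take, min_eq_left (by omega)]
  rw [htt] at hocc'
  have hocc : w <+: (X.take (n - i)).drop ((n - i') - p) := by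
    refine (occ_prefix_iff (List.take_prefix _ _) ?_).2 hocc'
    rw [List.length_take]; omega
  have := hE.2 _ hocc
  rw [hl1] at this
  omega

theorem key2 (hw : 1 ≤ w.length) {n : ℕ} (hn : w.length ≤ n) :
    ((strFin b (n - w.length)).filter (avoids w)).card
      = ∑ i ∈ (Finset.range w.length).filter
          (fun i => w.take (w.length - i) = w.drop i),
          ((strFin b (n - i)).filter (uniqEnd w)).card := by
  classical
  rw [stepA hw hn]
  have hU : Uset w n = ((Finset.range w.length).filter
      (fun i => w.take (w.length - i) = w.drop i)).biUnion (Vset w n) := by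
    ext X
    simp only [Finset.mem_biUnion, Finset.mem_filter, Finset.mem_range]
    constructor
    · intro hX
      obtain ⟨i, hi, hc, hXV⟩ := U_subset_V hw hn hX
      exact ⟨i, ⟨hi, hc⟩, hXV⟩
    · rintro ⟨i, ⟨hi, hc⟩, hXV⟩
      exact V_subset_U hw hi hn hc hXV
  rw [hU, Finset.card_biUnion]
  · refine Finset.sum_congr rfl fun i hi => ?_
    simp only [Finset.mem_filter, Finset.mem_range] at hi
    exact stepC hw hi.1 hn
  · intro i hi j hj hij
    simp only [Finset.mem_coe, Finset.mem_filter, Finset.mem_range] at hi hj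
    rw [Function.onFun, Finset.disjoint_left]
    intro X hXi hXj
    rcases Nat.lt_or_ge i j with h | h
    · exact V_disj_aux hw h hj.1 hn hXi hXj
    · exact V_disj_aux hw (by omega) hi.1 hn hXj hXi

theorem Nn_zero (hw : 1 ≤ w.length) : ((strFin b 0).filter (avoids w)).card = 1 := by
  classical
  have h0 : strFin b 0 = {([] : List (Fin b))} := by
    ext X; simp [mem_strFin, List.length_eq_zero_iff]
  rw [h0, Finset.filter_singleton, if_pos]
  · simp
  · intro i h
    have := h.length_le
    simp only [List.drop_nil, List.length_nil] at this
    omega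

theorem Tt_small (hw : 1 ≤ w.length) {m : ℕ} (hm : m < w.length) :
    ((strFin b m).filter (uniqEnd w)).card = 0 := by
  classical
  rw [Finset.card_eq_zero, Finset.filter_eq_empty_iff]
  intro X hX h
  have := h.1.length_le
  rw [mem_strFin.1 hX] at this
  omega

end GO

/-- The Guibas–Odlyzko formula `Z_w(0) = A_w / ((1 - bt) A_w + t^p)`, stated multiplied
through by the denominator. -/
theorem stmt14 (b : ℕ) (hb : 1 < b) (w : List (Fin b)) (hw : 1 ≤ w.length) :
    ((1 - PowerSeries.C (b : ℚ) * X) * Aw b w + X ^ w.length) * Zser b w [] [] 0 =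
      Aw b w := by
  classical
  set p := w.length with hp
  set S := Zser b w [] [] 0 with hSdef
  set T : PowerSeries ℚ :=
    PowerSeries.mk fun l => (((strFin b l).filter (uniqEnd w)).card : ℚ) with hTdef
  have hScoeff : ∀ l, (coeff l) S = (((strFin b l).filter (avoids w)).card : ℚ) := by
    intro l
    rw [hSdef, Zser, coeff_mk, Nxy_avoids hw]
  have h1 : T + S = 1 + (C (b : ℚ) * X) * S := by
    ext n
    rcases n with _ | n
    · have c0 : (coeff 0) (C (b : ℚ) * X * S) = 0 := by
        rw [coeff_zero_eq_constantCoeff]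
        simp [map_mul]
      rw [map_add, map_add, c0, hScoeff 0, Nn_zero hw, hTdef, coeff_mk,
        Tt_small hw (by omega : 0 < w.length)]
      simp
    · have hc : (coeff (n+1)) (C (b : ℚ) * X * S) = (b : ℚ) * (coeff n) S := by
        rw [mul_assoc, coeff_C_mul, coeff_succ_X_mul]
      rw [map_add, map_add, hc, hScoeff, hScoeff, hTdef, coeff_mk, coeff_one,
        if_neg (Nat.succ_ne_zero n)]
      have hk := congrArg (Nat.cast : ℕ → ℚ) (key1 (by omega : 0 < b) hw n)
      push_cast at hk
      linarith [hk]
  have h2 : Aw b w * T = X ^ p * S := by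
    ext n
    rw [Aw, Finset.sum_mul, map_sum]
    have hterm : ∀ i ∈ Finset.range w.length,
        (coeff n) ((if w.take (w.length - i) = w.drop i
            then (X : PowerSeries ℚ) ^ i else 0) * T)
          = (if w.take (w.length - i) = w.drop i
            then (if i ≤ n then (((strFin b (n - i)).filter (uniqEnd w)).card : ℚ) else 0)
            else 0) := by
      intro i _
      by_cases hc : w.take (w.length - i) = w.drop i
      · rw [if_pos hc, if_pos hc, coeff_X_pow_mul']
        by_cases hin : i ≤ n
        · rw [if_pos hin, if_pos hin, hTdef, coeff_mk]
        · rw [if_neg hin, if_neg hin]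
      · rw [if_neg hc, if_neg hc, zero_mul, map_zero]
    rw [Finset.sum_congr rfl hterm, coeff_X_pow_mul', ← hp]
    by_cases hpn : p ≤ n
    · rw [if_pos hpn, hScoeff]
      have hcong : ∀ i ∈ Finset.range w.length,
          (if w.take (w.length - i) = w.drop i
            then (if i ≤ n then (((strFin b (n - i)).filter (uniqEnd w)).card : ℚ) else 0)
            else 0)
          = (if w.take (w.length - i) = w.drop i
            then (((strFin b (n - i)).filter (uniqEnd w)).card : ℚ) else 0) := by
        intro i hi
        rw [Finset.mem_range] at hi
        by_cases hc : w.take (w.length - i) = w.drop i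
        · rw [if_pos hc, if_pos hc, if_pos (by omega : i ≤ n)]
        · rw [if_neg hc, if_neg hc]
      rw [Finset.sum_congr rfl hcong, ← Finset.sum_filter]
      exact_mod_cast (key2 hw hpn).symm
    · rw [if_neg hpn]
      refine Finset.sum_eq_zero fun i hi => ?_
      rw [Finset.mem_range] at hi
      split_ifs with h1 h2
      · rw [Tt_small hw (by omega : n - i < w.length)]
        norm_num
      · rfl
      · rfl
  linear_combination (Aw b w) * h1 - h2
end
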